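/- arXiv:2206.10308 — 4 statements merged into one kernel-verified Lean document; each statement's English description precedes it below -/
import Mathlib

section
/- Let (P_n)_{n≥0} be a monic OPS with recurrence coefficients (B_n), (C_n), and suppose there exist a, c ∈ ℂ and complex sequences (a_n)_{n≥0}, (b_n)_{n≥0}, (c_n)_{n≥0} with c_0 = 0 such that (a·X − c)·S_q P_n = (a_n·X + b_n)·P_n + c_n·P_{n−1} (as polynomials in ℂ[X]) for all n ≥ 0. Set U_2(X) = (α² − 1)(X² − 1), g_n = b_n + a_n B_n and s_n = c_n + a_n C_n. Then for every n ≥ 2 one has the polynomial identity (a·X − c)·U_2·D_q P_n = r1_n·P_{n+2} + r2_n·P_{n+1} + r3_n·P_n + r4_n·P_{n−1} + r5_n·P_{n−2}, where r1_n = a_{n+1} − α a_n, r2_n = g_{n+1} − α g_n + a_n(B_n − α B_{n+1}), r3_n = s_{n+1} − α s_n + g_n(1 − α)B_n + a_{n−1}C_n − α a_n C_{n+1}, r4_n = (g_{n−1} − α g_n)C_n + s_n(B_n − α B_{n−1}), and r5_n = C_n s_{n−1} − α C_{n−1} s_n. -/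
noncomputable section

/-- Real power `q ^ r` (with `q > 0` in applications), coerced into `ℂ`. -/
def rp (q : ℝ) (r : ℝ) : ℂ := ((q ^ r : ℝ) : ℂ)

/-- The lattice point `x(z) = (z + z⁻¹)/2`. -/
def xl (z : ℂ) : ℂ := (z + z⁻¹) / 2

/-- `x₊(z) = (q^{1/2} z + q^{-1/2} z⁻¹)/2`. -/
def xp (q : ℝ) (z : ℂ) : ℂ := (rp q (1/2) * z + rp q (-(1/2)) * z⁻¹) / 2

/-- `x₋(z) = (q^{-1/2} z + q^{1/2} z⁻¹)/2`. -/
def xm (q : ℝ) (z : ℂ) : ℂ := (rp q (-(1/2)) * z + rp q (1/2) * z⁻¹) / 2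

/-- `IsSq q f g` means `g = S_q f`, i.e. `g` satisfies the defining property of the
averaging operator applied to `f`. -/
def IsSq (q : ℝ) (f g : Polynomial ℂ) : Prop :=
  ∀ z : ℂ, z ≠ 0 → Polynomial.eval (xl z) g =
    (Polynomial.eval (xp q z) f + Polynomial.eval (xm q z) f) / 2

/-- `IsDq q f g` means `g = D_q f`, i.e. `g` satisfies the defining property of the
Askey-Wilson operator applied to `f`. -/
def IsDq (q : ℝ) (f g : Polynomial ℂ) : Prop :=
  ∀ z : ℂ, z ≠ 0 → Polynomial.eval (xl z) g * (xp q z - xm q z) =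
    Polynomial.eval (xp q z) f - Polynomial.eval (xm q z) f

/-- `α = (q^{1/2} + q^{-1/2})/2`. -/
def alphaC (q : ℝ) : ℂ := (rp q (1/2) + rp q (-(1/2))) / 2

/-- `α_n = (q^{n/2} + q^{-n/2})/2`. -/
def alphaN (q : ℝ) (n : ℕ) : ℂ := (rp q ((n : ℝ)/2) + rp q (-((n : ℝ)/2))) / 2

/-- `γ_n = (q^{n/2} - q^{-n/2})/(q^{1/2} - q^{-1/2})`. -/
def gammaN (q : ℝ) (n : ℕ) : ℂ :=
  (rp q ((n : ℝ)/2) - rp q (-((n : ℝ)/2))) / (rp q (1/2) - rp q (-(1/2)))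

/-- The monic Chebyshev polynomials of the first kind. -/
def chebM (n : ℕ) : Polynomial ℂ :=
  if n = 0 then 1 else (2 : ℂ) ^ (1 - (n : ℤ)) • Polynomial.Chebyshev.T ℂ (n : ℤ)

end

/-- The core pointwise algebraic identity, with all evaluations abstracted as
complex numbers. -/
theorem keylemma (x Xp Xm D U1 U2 U3 V1 V2 V3 S1 S2 S3 p0 p1 p2 p3 p4
    al a c a1 a2 a3 b1 b2 b3 c1 c2 c3 B1 B2 B3 C1 C2 C3 : ℂ)
    (hsq : (Xp - Xm) ^ 2 = 4 * (al ^ 2 - 1) * (x ^ 2 - 1))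
    (hsum : Xp + Xm = 2 * al * x)
    (hD : D * (Xp - Xm) = U2 - V2)
    (hRu : Xp * U2 = U3 + B2 * U2 + C2 * U1)
    (hRv : Xm * V2 = V3 + B2 * V2 + C2 * V1)
    (hS1 : S1 = (U1 + V1) / 2) (hS2 : S2 = (U2 + V2) / 2) (hS3 : S3 = (U3 + V3) / 2)
    (Hs1 : (a * x - c) * S1 = (a1 * x + b1) * p1 + c1 * p0)
    (Hs2 : (a * x - c) * S2 = (a2 * x + b2) * p2 + c2 * p1)
    (Hs3 : (a * x - c) * S3 = (a3 * x + b3) * p3 + c3 * p2)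
    (Hr1 : x * p1 = p2 + B1 * p1 + C1 * p0)
    (Hr2 : x * p2 = p3 + B2 * p2 + C2 * p1)
    (Hr3 : x * p3 = p4 + B3 * p3 + C3 * p2) :
    (a * x - c) * ((al ^ 2 - 1) * (x ^ 2 - 1)) * D =
      (a3 - al * a2) * p4
        + ((b3 + a3 * B3) - al * (b2 + a2 * B2) + a2 * (B2 - al * B3)) * p3
        + ((c3 + a3 * C3) - al * (c2 + a2 * C2) + (b2 + a2 * B2) * (1 - al) * B2
            + a1 * C2 - al * a2 * C3) * p2
        + (((b1 + a1 * B1) - al * (b2 + a2 * B2)) * C2 + (c2 + a2 * C2) * (B2 - al * B1)) * p1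
        + (C2 * (c1 + a1 * C1) - al * C1 * (c2 + a2 * C2)) * p0 := by
  linear_combination (-(a*x-c)*D/4) * hsq + ((a*x-c)*(Xp-Xm)/4) * hD
    + ((a*x-c)/2) * hRu + ((a*x-c)/2) * hRv + (-(a*x-c)*(U2+V2)/4) * hsum
    + (-(a*x-c)) * hS3 + (-(a*x-c)*(B2-al*x)) * hS2 + (-(a*x-c)*C2) * hS1
    + Hs3 + (B2-al*x) * Hs2 + C2 * Hs1
    + (a3-al*a2) * Hr3 + (a2*B2-al*b2-al*a2*x-al*a2*B2) * Hr2
    + (C2*a1-al*c2-al*a2*C2) * Hr1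

theorem stmt0 (q : ℝ) (hq0 : 0 < q) (hq1 : q < 1)
    (P : ℕ → Polynomial ℂ) (B C : ℕ → ℂ)
    (hmonic : ∀ n, (P n).Monic) (hdeg : ∀ n, (P n).natDegree = n)
    (hCne : ∀ n, 1 ≤ n → C n ≠ 0)
    (hrec0 : Polynomial.X * P 0 = P 1 + Polynomial.C (B 0) * P 0)
    (hrec : ∀ n : ℕ, Polynomial.X * P (n + 1) =
      P (n + 2) + Polynomial.C (B (n + 1)) * P (n + 1) + Polynomial.C (C (n + 1)) * P n)
    (a c : ℂ) (sa sb sc : ℕ → ℂ) (hc0 : sc 0 = 0)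
    (SP : ℕ → Polynomial ℂ) (hSP : ∀ n, IsSq q (P n) (SP n))
    (hstruct : ∀ n : ℕ, (Polynomial.C a * Polynomial.X - Polynomial.C c) * SP n =
      (Polynomial.C (sa n) * Polynomial.X + Polynomial.C (sb n)) * P n
        + Polynomial.C (sc n) * P (n - 1)) :
    ∀ n : ℕ, 2 ≤ n → ∀ Dn : Polynomial ℂ, IsDq q (P n) Dn →
      (Polynomial.C a * Polynomial.X - Polynomial.C c) *
          (Polynomial.C (alphaC q ^ 2 - 1) * (Polynomial.X ^ 2 - 1)) * Dn =
        Polynomial.C (sa (n + 1) - alphaC q * sa n) * P (n + 2)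
          + Polynomial.C ((sb (n + 1) + sa (n + 1) * B (n + 1)) - alphaC q * (sb n + sa n * B n)
              + sa n * (B n - alphaC q * B (n + 1))) * P (n + 1)
          + Polynomial.C ((sc (n + 1) + sa (n + 1) * C (n + 1)) - alphaC q * (sc n + sa n * C n)
              + (sb n + sa n * B n) * (1 - alphaC q) * B n
              + sa (n - 1) * C n - alphaC q * sa n * C (n + 1)) * P n
          + Polynomial.C (((sb (n - 1) + sa (n - 1) * B (n - 1)) - alphaC q * (sb n + sa n * B n)) * C n
              + (sc n + sa n * C n) * (B n - alphaC q * B (n - 1))) * P (n - 1)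
          + Polynomial.C (C n * (sc (n - 1) + sa (n - 1) * C (n - 1))
              - alphaC q * C (n - 1) * (sc n + sa n * C n)) * P (n - 2) := by
  intro n hn Dn hDn
  obtain ⟨m, rfl⟩ : ∃ m, n = m + 2 := ⟨n - 2, by omega⟩
  simp only [show m + 2 + 1 = m + 3 from rfl, show m + 2 + 2 = m + 4 from rfl,
    show m + 2 - 1 = m + 1 from rfl, show m + 2 - 2 = m from rfl]
  apply Polynomial.eq_of_infinite_eval_eq
  apply Set.infinite_of_injective_forall_mem
    (f := fun k : ℕ => xl ((k : ℂ) + 2)) ?_ ?_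
  · -- injectivity
    intro k l h
    have hu : ((k : ℂ) + 2) ≠ 0 := by
      have : ((k : ℂ) + 2) = (((k + 2 : ℕ) : ℂ)) := by push_cast; ring
      rw [this]
      exact Nat.cast_ne_zero.mpr (by omega)
    have hw : ((l : ℂ) + 2) ≠ 0 := by
      have : ((l : ℂ) + 2) = (((l + 2 : ℕ) : ℂ)) := by push_cast; ring
      rw [this]
      exact Nat.cast_ne_zero.mpr (by omega)
    set u : ℂ := (k : ℂ) + 2 with hudef
    set w : ℂ := (l : ℂ) + 2 with hwdef
    have hu1 : u * u⁻¹ = 1 := mul_inv_cancel₀ hu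
    have hw1 : w * w⁻¹ = 1 := mul_inv_cancel₀ hw
    have h' : (u + u⁻¹) / 2 = (w + w⁻¹) / 2 := h
    have key2 : (u - w) * (u * w - 1) = 0 := by
      linear_combination (2*u*w) * h' - w * hu1 + u * hw1
    rcases mul_eq_zero.mp key2 with h0 | h0
    · have hkl : (k : ℂ) = (l : ℂ) := by
        have := sub_eq_zero.mp h0
        rw [hudef, hwdef] at this
        linear_combination this
      exact_mod_cast hkl
    · exfalso
      have huw : u * w = 1 := by linear_combination h0
      have : (((k + 2) * (l + 2) : ℕ) : ℂ) = 1 := by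
        push_cast
        rw [hudef, hwdef] at huw
        linear_combination huw
      have : ((k + 2) * (l + 2) : ℕ) = 1 := by exact_mod_cast this
      nlinarith [Nat.le_of_eq this.symm]
  · -- each point is in the agreement set
    intro k
    set z : ℂ := (k : ℂ) + 2 with hzdef
    have hz : z ≠ 0 := by
      have : z = (((k + 2 : ℕ) : ℂ)) := by rw [hzdef]; push_cast; ring
      rw [this]
      exact Nat.cast_ne_zero.mpr (by omega)
    show Polynomial.eval (xl z) _ = Polynomial.eval (xl z) _
    -- basic facts
    have hzz : z * z⁻¹ = 1 := mul_inv_cancel₀ hz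
    have hss : rp q (1/2) * rp q (-(1/2)) = 1 := by
      unfold rp
      rw [← Complex.ofReal_mul, ← Real.rpow_add hq0]
      norm_num
    have hsum : xp q z + xm q z = 2 * alphaC q * xl z := by
      unfold xp xm alphaC xl; ring
    have hsq : (xp q z - xm q z) ^ 2 = 4 * (alphaC q ^ 2 - 1) * ((xl z) ^ 2 - 1) := by
      unfold xp xm alphaC xl
      linear_combination (4*(z*z⁻¹) - (z + z⁻¹)^2) * hss
        + (4 - (rp q (1/2) + rp q (-(1/2)))^2) * hzz
    -- evaluated hypotheses
    have hS1 := hSP (m+1) z hz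
    have hS2 := hSP (m+2) z hz
    have hS3 := hSP (m+3) z hz
    have hD := hDn z hz
    have hRu : xp q z * (P (m+2)).eval (xp q z) =
        (P (m+3)).eval (xp q z) + B (m+2) * (P (m+2)).eval (xp q z)
          + C (m+2) * (P (m+1)).eval (xp q z) := by
      have := congrArg (Polynomial.eval (xp q z)) (hrec (m+1))
      simpa using this
    have hRv : xm q z * (P (m+2)).eval (xm q z) =
        (P (m+3)).eval (xm q z) + B (m+2) * (P (m+2)).eval (xm q z)
          + C (m+2) * (P (m+1)).eval (xm q z) := by
      have := congrArg (Polynomial.eval (xm q z)) (hrec (m+1))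
      simpa using this
    have Hr1 : xl z * (P (m+1)).eval (xl z) =
        (P (m+2)).eval (xl z) + B (m+1) * (P (m+1)).eval (xl z)
          + C (m+1) * (P m).eval (xl z) := by
      have := congrArg (Polynomial.eval (xl z)) (hrec m)
      simpa using this
    have Hr2 : xl z * (P (m+2)).eval (xl z) =
        (P (m+3)).eval (xl z) + B (m+2) * (P (m+2)).eval (xl z)
          + C (m+2) * (P (m+1)).eval (xl z) := by
      have := congrArg (Polynomial.eval (xl z)) (hrec (m+1))
      simpa using this
    have Hr3 : xl z * (P (m+3)).eval (xl z) =
        (P (m+4)).eval (xl z) + B (m+3) * (P (m+3)).eval (xl z)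
          + C (m+3) * (P (m+2)).eval (xl z) := by
      have := congrArg (Polynomial.eval (xl z)) (hrec (m+2))
      simpa using this
    have Hs1 : (a * xl z - c) * (SP (m+1)).eval (xl z) =
        (sa (m+1) * xl z + sb (m+1)) * (P (m+1)).eval (xl z)
          + sc (m+1) * (P m).eval (xl z) := by
      have := congrArg (Polynomial.eval (xl z)) (hstruct (m+1))
      simpa using this
    have Hs2 : (a * xl z - c) * (SP (m+2)).eval (xl z) =
        (sa (m+2) * xl z + sb (m+2)) * (P (m+2)).eval (xl z)
          + sc (m+2) * (P (m+1)).eval (xl z) := by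
      have := congrArg (Polynomial.eval (xl z)) (hstruct (m+2))
      simpa using this
    have Hs3 : (a * xl z - c) * (SP (m+3)).eval (xl z) =
        (sa (m+3) * xl z + sb (m+3)) * (P (m+3)).eval (xl z)
          + sc (m+3) * (P (m+2)).eval (xl z) := by
      have := congrArg (Polynomial.eval (xl z)) (hstruct (m+3))
      simpa using this
    have main := keylemma (xl z) (xp q z) (xm q z) (Dn.eval (xl z))
      ((P (m+1)).eval (xp q z)) ((P (m+2)).eval (xp q z)) ((P (m+3)).eval (xp q z))
      ((P (m+1)).eval (xm q z)) ((P (m+2)).eval (xm q z)) ((P (m+3)).eval (xm q z))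
      ((SP (m+1)).eval (xl z)) ((SP (m+2)).eval (xl z)) ((SP (m+3)).eval (xl z))
      ((P m).eval (xl z)) ((P (m+1)).eval (xl z)) ((P (m+2)).eval (xl z))
      ((P (m+3)).eval (xl z)) ((P (m+4)).eval (xl z))
      (alphaC q) a c (sa (m+1)) (sa (m+2)) (sa (m+3)) (sb (m+1)) (sb (m+2)) (sb (m+3))
      (sc (m+1)) (sc (m+2)) (sc (m+3)) (B (m+1)) (B (m+2)) (B (m+3))
      (C (m+1)) (C (m+2)) (C (m+3))
      hsq hsum hD hRu hRv
      (by rw [hS1]) (by rw [hS2]) (by rw [hS3])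
      Hs1 Hs2 Hs3 Hr1 Hr2 Hr3
    simp only [Polynomial.eval_mul, Polynomial.eval_add, Polynomial.eval_sub,
      Polynomial.eval_pow, Polynomial.eval_one, Polynomial.eval_C, Polynomial.eval_X]
    linear_combination main
end

section
/- Let (P_n)_{n≥0} be a monic OPS with recurrence coefficients (B_n), (C_n), and suppose there exist a, c ∈ ℂ and complex sequences (a_n)_{n≥0}, (b_n)_{n≥0}, (c_n)_{n≥0} with c_0 = 0 such that (a·X − c)·S_q P_n = (a_n·X + b_n)·P_n + c_n·P_{n−1} for all n ≥ 0. Set t_n = c_n/C_n and r_n = t_n + a_n − a_{n−1} for n ≥ 1. Then for every n ≥ 3: r_n·(B_n² − 2α B_n B_{n−1} + B_{n−1}²) = (r_{n+1} + r_{n+2})·(C_{n+1} − 1/4) − 2(1 + α)·r_n·(C_n − 1/4) + (r_{n−1} + r_{n−2})·(C_{n−1} − 1/4). -/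
open Polynomial

section Basics

variable {q : ℝ}

lemma rp_mul_rp (hq0 : 0 < q) : rp q (1/2) * rp q (-(1/2)) = 1 := by
  unfold rp
  rw [← Complex.ofReal_mul, ← Real.rpow_add hq0]
  norm_num

lemma rp_half_pow (hq0 : 0 < q) (m : ℕ) : rp q ((m : ℝ)/2) = rp q (1/2) ^ m := by
  unfold rp
  rw [← Complex.ofReal_pow, ← Real.rpow_natCast (q ^ ((1:ℝ)/2)) m, ← Real.rpow_mul hq0.le]
  norm_num [mul_comm, div_eq_mul_inv]

lemma rp_neg_half_pow (hq0 : 0 < q) (m : ℕ) : rp q (-((m : ℝ)/2)) = rp q (-(1/2)) ^ m := by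
  unfold rp
  rw [← Complex.ofReal_pow, ← Real.rpow_natCast (q ^ (-(1/2) : ℝ)) m, ← Real.rpow_mul hq0.le]
  norm_num [mul_comm, div_eq_mul_inv]

lemma rp_zero : rp q 0 = 1 := by simp [rp]

lemma alphaN_zero : alphaN q 0 = 1 := by
  simp only [alphaN, Nat.cast_zero, zero_div, neg_zero, rp_zero]
  norm_num

lemma hx1 (z : ℂ) : xp q z + xm q z = 2 * alphaC q * xl z := by
  unfold xp xm alphaC xl; ring

lemma hx2 (hq0 : 0 < q) {z : ℂ} (hz : z ≠ 0) :
    xp q z * xm q z = xl z ^ 2 + alphaC q ^ 2 - 1 := by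
  have h1 : rp q (1/2) * rp q (-(1/2)) = 1 := rp_mul_rp hq0
  have h2 : z * z⁻¹ = 1 := mul_inv_cancel₀ hz
  unfold xp xm alphaC xl
  linear_combination ((z^2 + (z⁻¹)^2 - 2)/4) * h1 +
    ((rp q (1/2)^2 + rp q (-(1/2))^2 - 2)/4) * h2

lemma xp_eq_xl (hq0 : 0 < q) (z : ℂ) : xp q z = xl (rp q (1/2) * z) := by
  have hv : rp q (-(1/2)) = (rp q (1/2))⁻¹ := eq_inv_of_mul_eq_one_right (rp_mul_rp hq0)
  unfold xp xl
  rw [hv, mul_inv]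

lemma xm_eq_xl (hq0 : 0 < q) (z : ℂ) : xm q z = xl (rp q (-(1/2)) * z) := by
  have hv : rp q (1/2) = (rp q (-(1/2)))⁻¹ :=
    eq_inv_of_mul_eq_one_right (by linear_combination rp_mul_rp hq0)
  unfold xm xl
  rw [hv, mul_inv]

lemma exists_xl (x : ℂ) : ∃ z : ℂ, z ≠ 0 ∧ xl z = x := by
  obtain ⟨z, hz⟩ := Complex.exists_root
    (f := Polynomial.C 1 * X ^ 2 + Polynomial.C (-(2*x)) * X + Polynomial.C 1)
    (by rw [Polynomial.degree_quadratic (by norm_num : (1:ℂ) ≠ 0)]; norm_num)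
  have hz' : z ^ 2 - 2 * x * z + 1 = 0 := by
    have h := hz
    simp only [Polynomial.IsRoot, Polynomial.eval_add, Polynomial.eval_mul,
      Polynomial.eval_pow, Polynomial.eval_C, Polynomial.eval_X] at h
    linear_combination h
  have hzne : z ≠ 0 := by
    intro h; rw [h] at hz'; norm_num at hz'
  refine ⟨z, hzne, ?_⟩
  have h2 : z * z⁻¹ = 1 := mul_inv_cancel₀ hzne
  unfold xl
  rw [div_eq_iff (two_ne_zero)]
  linear_combination z⁻¹ * hz' + (2 * x - z) * h2

lemma poly_funext {f g : Polynomial ℂ}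
    (h : ∀ z : ℂ, z ≠ 0 → Polynomial.eval (xl z) f = Polynomial.eval (xl z) g) : f = g := by
  apply Polynomial.funext
  intro x
  obtain ⟨z, hz, hxl⟩ := exists_xl x
  rw [← hxl]; exact h z hz

lemma poly_funext0 {f : Polynomial ℂ}
    (h : ∀ z : ℂ, z ≠ 0 → Polynomial.eval (xl z) f = 0) : f = 0 := by
  apply poly_funext (g := 0)
  simpa using h

end Basics

section Cheb

open Polynomial Polynomial.Chebyshev

variable {q : ℝ}

lemma T_xl {z : ℂ} (hz : z ≠ 0) :
    ∀ m : ℕ, Polynomial.eval (xl z) (T ℂ (m : ℤ)) = (z ^ m + z⁻¹ ^ m) / 2 := by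
  have key : ∀ m : ℕ,
      Polynomial.eval (xl z) (T ℂ (m : ℤ)) = (z ^ m + z⁻¹ ^ m) / 2 ∧
      Polynomial.eval (xl z) (T ℂ ((m+1 : ℕ) : ℤ)) = (z ^ (m+1) + z⁻¹ ^ (m+1)) / 2 := by
    intro m
    induction m with
    | zero =>
      constructor
      · simp [T_zero]
      · norm_num [T_one, xl]
    | succ k ih =>
      refine ⟨ih.2, ?_⟩
      have hcast : ((k + 2 : ℕ) : ℤ) = ((k : ℤ) + 2) := by push_cast; ring
      rw [hcast, T_add_two]
      have h1 : ((k + 1 : ℕ) : ℤ) = ((k : ℤ) + 1) := by push_cast; ring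
      rw [h1] at ih
      simp only [Polynomial.eval_sub, Polynomial.eval_mul, Polynomial.eval_ofNat,
        Polynomial.eval_X, ih.1, ih.2]
      have h2 : z * z⁻¹ = 1 := mul_inv_cancel₀ hz
      unfold xl
      linear_combination ((z^k + z⁻¹^k)/2) * h2
  exact fun m => (key m).1

lemma T_natDegree_le : ∀ m : ℕ, (T ℂ (m : ℤ)).natDegree ≤ m := by
  have key : ∀ m : ℕ, (T ℂ (m : ℤ)).natDegree ≤ m ∧ (T ℂ ((m+1:ℕ) : ℤ)).natDegree ≤ m+1 := by
    intro m
    induction m with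
    | zero =>
      constructor
      · simp [T_zero]
      · rw [show ((1:ℕ):ℤ) = 1 from rfl, T_one]; exact natDegree_X_le
    | succ k ih =>
      refine ⟨ih.2, ?_⟩
      have hcast : ((k + 2 : ℕ) : ℤ) = ((k : ℤ) + 2) := by push_cast; ring
      rw [hcast, T_add_two]
      refine le_trans (natDegree_sub_le _ _) ?_
      rw [max_le_iff]
      constructor
      · refine le_trans (natDegree_mul_le) ?_
        have h2 : (2 * X : Polynomial ℂ).natDegree ≤ 1 := by
          refine le_trans (natDegree_mul_le) ?_
          simp [natDegree_X_le]
        have h1 : ((k + 1 : ℕ) : ℤ) = ((k : ℤ) + 1) := by push_cast; ring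
        rw [← h1]
        omega
      · exact le_trans ih.1 (by omega)
  intro m
  exact (key m).1

end Cheb

section Cheb2

open Polynomial Polynomial.Chebyshev

variable {q : ℝ}

lemma T_coeff_top : ∀ m : ℕ, (T ℂ ((m+1:ℕ) : ℤ)).coeff (m+1) = 2 ^ m := by
  have key : ∀ m : ℕ, (T ℂ ((m+1:ℕ) : ℤ)).coeff (m+1) = 2 ^ m ∧
      (T ℂ ((m+2:ℕ) : ℤ)).coeff (m+2) = 2 ^ (m+1) := by
    intro m
    induction m with
    | zero =>
      constructor
      · rw [show ((1:ℕ):ℤ) = 1 from rfl, T_one]; simp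
      · rw [show ((2:ℕ):ℤ) = 2 from rfl, T_two]
        simp [coeff_sub, coeff_ofNat_mul, Polynomial.coeff_one]
    | succ k ih =>
      refine ⟨ih.2, ?_⟩
      have hT3 : T ℂ ((k+3:ℕ):ℤ) = 2*X*T ℂ ((k+2:ℕ):ℤ) - T ℂ ((k+1:ℕ):ℤ) := by
        have hc : ((k+3:ℕ):ℤ) = ((k+1:ℕ):ℤ) + 2 := by push_cast; ring
        rw [hc, T_add_two]
        have hc2 : ((k+1:ℕ):ℤ) + 1 = ((k+2:ℕ):ℤ) := by push_cast; ring
        rw [hc2]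
      have e1 : (2 * X * T ℂ ((k+2:ℕ):ℤ)).coeff (k+3) = 2 * (T ℂ ((k+2:ℕ):ℤ)).coeff (k+2) := by
        rw [mul_assoc, coeff_ofNat_mul, show (k+3) = (k+2)+1 from rfl, coeff_X_mul]
      have e2 : (T ℂ ((k+1:ℕ):ℤ)).coeff (k+3) = 0 := by
        apply coeff_eq_zero_of_natDegree_lt
        have := T_natDegree_le (k+1)
        omega
      rw [hT3, coeff_sub, e1, e2, ih.2]
      ring
  intro m; exact (key m).1

lemma IsSq_T (hq0 : 0 < q) (m : ℕ) :
    IsSq q (T ℂ (m : ℤ)) (alphaN q m • T ℂ (m : ℤ)) := by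
  intro z hz
  have hu : rp q (1/2) ≠ 0 := by
    intro h
    have := rp_mul_rp hq0
    rw [h] at this; simp at this
  have hv : rp q (-(1/2)) ≠ 0 := by
    intro h
    have := rp_mul_rp hq0
    rw [h] at this; simp at this
  rw [Polynomial.eval_smul, smul_eq_mul, T_xl hz, xp_eq_xl hq0, xm_eq_xl hq0,
    T_xl (mul_ne_zero hu hz), T_xl (mul_ne_zero hv hz)]
  have huv : rp q (1/2) * rp q (-(1/2)) = 1 := rp_mul_rp hq0
  have hzz : z * z⁻¹ = 1 := mul_inv_cancel₀ hz
  have hNa : alphaN q m = (rp q (1/2) ^ m + rp q (-(1/2)) ^ m)/2 := by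
    rw [alphaN, rp_half_pow hq0, rp_neg_half_pow hq0]
  rw [hNa, mul_inv_rev, mul_inv_rev, mul_pow, mul_pow, mul_pow, mul_pow]
  have h1 : (rp q (1/2))⁻¹ = rp q (-(1/2)) := inv_eq_of_mul_eq_one_right huv
  have h2 : (rp q (-(1/2)))⁻¹ = rp q (1/2) :=
    inv_eq_of_mul_eq_one_right (by linear_combination huv)
  rw [h1, h2]
  ring

end Cheb2

section SqBound

open Polynomial Polynomial.Chebyshev

variable {q : ℝ}

lemma Sq_bound (hq0 : 0 < q) :
    ∀ m : ℕ, ∀ f g : Polynomial ℂ, IsSq q f g → f.natDegree ≤ m →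
      g.natDegree ≤ m ∧ ∀ k, m ≤ k → g.coeff k = alphaN q k * f.coeff k := by
  intro m
  induction m with
  | zero =>
    intro f g hsq hdf
    have hf : f = Polynomial.C (f.coeff 0) := (Polynomial.eq_C_of_natDegree_le_zero hdf)
    have hev : ∀ w : ℂ, Polynomial.eval w f = f.coeff 0 := by
      intro w
      conv_lhs => rw [hf]
      exact Polynomial.eval_C
    have hg : g = Polynomial.C (f.coeff 0) := by
      apply poly_funext (g := Polynomial.C (f.coeff 0))
      intro z hz
      rw [hsq z hz, Polynomial.eval_C, hev, hev]
      ring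
    constructor
    · rw [hg]; simp
    · intro k hk
      rw [hg]
      rcases Nat.eq_zero_or_pos k with hk0 | hkpos
      · subst hk0
        rw [Polynomial.coeff_C_zero, alphaN_zero]
        conv_rhs => rw [hf, Polynomial.coeff_C_zero]
        ring
      · rw [Polynomial.coeff_C, if_neg (by omega)]
        have : f.coeff k = 0 := Polynomial.coeff_eq_zero_of_natDegree_lt (by omega)
        rw [this, mul_zero]
  | succ m ih =>
    intro f g hsq hdf
    set d : ℂ := f.coeff (m+1) / 2 ^ m with hd
    set f' : Polynomial ℂ := f - Polynomial.C d * T ℂ ((m+1 : ℕ) : ℤ) with hf'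
    set g' : Polynomial ℂ := g - Polynomial.C (alphaN q (m+1) * d) * T ℂ ((m+1 : ℕ) : ℤ) with hg'
    have hTd : (T ℂ ((m+1:ℕ):ℤ)).natDegree ≤ m + 1 := T_natDegree_le (m+1)
    have hTc : (T ℂ ((m+1:ℕ):ℤ)).coeff (m+1) = 2 ^ m := T_coeff_top m
    have hdf' : f'.natDegree ≤ m := by
      rw [Polynomial.natDegree_le_iff_coeff_eq_zero]
      intro j hj
      rw [hf', Polynomial.coeff_sub, Polynomial.coeff_C_mul]
      rcases Nat.lt_or_ge (m+1) j with h | h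
      · rw [Polynomial.coeff_eq_zero_of_natDegree_lt (lt_of_le_of_lt hdf h),
          Polynomial.coeff_eq_zero_of_natDegree_lt (lt_of_le_of_lt hTd h)]
        ring
      · have hj1 : j = m + 1 := by omega
        subst hj1
        rw [hTc, hd]
        field_simp
        ring
    have hsq' : IsSq q f' g' := by
      intro z hz
      have h1 := hsq z hz
      have h2 := IsSq_T hq0 (m+1) z hz
      rw [Polynomial.eval_smul, smul_eq_mul] at h2
      rw [hf', hg']
      simp only [Polynomial.eval_sub, Polynomial.eval_mul, Polynomial.eval_C]
      rw [h1]
      linear_combination (-d) * h2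
    obtain ⟨hdg', hcg'⟩ := ih f' g' hsq' hdf'
    have hgeq : g = g' + Polynomial.C (alphaN q (m+1) * d) * T ℂ ((m+1 : ℕ) : ℤ) := by
      rw [hg']; ring
    constructor
    · rw [hgeq]
      refine le_trans (Polynomial.natDegree_add_le _ _) ?_
      rw [max_le_iff]
      exact ⟨le_trans hdg' (by omega),
        le_trans (Polynomial.natDegree_C_mul_le _ _) hTd⟩
    · intro k hk
      rw [hgeq, Polynomial.coeff_add, Polynomial.coeff_C_mul]
      rcases Nat.lt_or_ge (m+1) k with h | h
      · rw [Polynomial.coeff_eq_zero_of_natDegree_lt (lt_of_le_of_lt hdg' (by omega)),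
          Polynomial.coeff_eq_zero_of_natDegree_lt (lt_of_le_of_lt hTd h),
          Polynomial.coeff_eq_zero_of_natDegree_lt (lt_of_le_of_lt hdf h)]
        ring
      · have hk1 : k = m + 1 := by omega
        subst hk1
        rw [Polynomial.coeff_eq_zero_of_natDegree_lt (lt_of_le_of_lt hdg' (by omega)), hTc, hd]
        field_simp
        ring
  
end SqBound

section StructSa

open Polynomial

variable {q : ℝ}

lemma struct_sa (hq0 : 0 < q)
    (P : ℕ → Polynomial ℂ) (Bs Cs : ℕ → ℂ)
    (hmonic : ∀ n, (P n).Monic) (hdeg : ∀ n, (P n).natDegree = n)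
    (a c : ℂ) (sa sb sc : ℕ → ℂ)
    (SP : ℕ → Polynomial ℂ) (hSP : ∀ n, IsSq q (P n) (SP n))
    (hstruct : ∀ n : ℕ, (Polynomial.C a * Polynomial.X - Polynomial.C c) * SP n =
      (Polynomial.C (sa n) * Polynomial.X + Polynomial.C (sb n)) * P n
        + Polynomial.C (sc n) * P (n - 1)) :
    ∀ m : ℕ, sa m = a * alphaN q m := by
  intro m
  have hb := Sq_bound hq0 m (P m) (SP m) (hSP m) (le_of_eq (hdeg m))
  have e5 : (P m).coeff m = 1 := by
    have := hmonic m
    rw [Polynomial.Monic, Polynomial.leadingCoeff, hdeg m] at this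
    exact this
  have e1 : (SP m).coeff m = alphaN q m := by
    rw [hb.2 m le_rfl, e5, mul_one]
  have e2 : (SP m).coeff (m+1) = 0 :=
    Polynomial.coeff_eq_zero_of_natDegree_lt (by omega)
  have e3 : (P m).coeff (m+1) = 0 :=
    Polynomial.coeff_eq_zero_of_natDegree_lt (by rw [hdeg m]; omega)
  have e4 : (P (m-1)).coeff (m+1) = 0 :=
    Polynomial.coeff_eq_zero_of_natDegree_lt (by rw [hdeg (m-1)]; omega)
  have hre : Polynomial.C a * (Polynomial.X * SP m) - Polynomial.C c * SP m =
      Polynomial.C (sa m) * (Polynomial.X * P m) + Polynomial.C (sb m) * P m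
        + Polynomial.C (sc m) * P (m - 1) := by
    linear_combination hstruct m
  have h := congrArg (fun p => Polynomial.coeff p (m+1)) hre
  simp only [Polynomial.coeff_sub, Polynomial.coeff_add, Polynomial.coeff_C_mul,
    Polynomial.coeff_X_mul] at h
  rw [e1, e2, e3, e4, e5] at h
  linear_combination -h

end StructSa

section SaRec

variable {q : ℝ}

lemma sa_rec (hq0 : 0 < q) (a : ℂ) (sa : ℕ → ℂ) (hsa : ∀ m, sa m = a * alphaN q m) :
    ∀ m : ℕ, sa (m+2) = 2 * alphaC q * sa (m+1) - sa m := by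
  intro m
  rw [hsa, hsa, hsa]
  unfold alphaN alphaC
  rw [rp_half_pow hq0 (m+2), rp_neg_half_pow hq0 (m+2), rp_half_pow hq0 (m+1),
    rp_neg_half_pow hq0 (m+1), rp_half_pow hq0 m, rp_neg_half_pow hq0 m]
  have huv := rp_mul_rp hq0
  linear_combination (-(a/2) * ((rp q (1/2))^m + (rp q (-(1/2)))^m)) * huv

end SaRec



section Pi

open Polynomial

variable {q : ℝ}

lemma PiA (hq0 : 0 < q)
    (P : ℕ → Polynomial ℂ) (Bv Cv : ℕ → ℂ)
    (hrec : ∀ n : ℕ, Polynomial.X * P (n + 1) =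
      P (n + 2) + Polynomial.C (Bv (n + 1)) * P (n + 1) + Polynomial.C (Cv (n + 1)) * P n)
    (a c : ℂ) (sa sb sc : ℕ → ℂ)
    (SP : ℕ → Polynomial ℂ) (hSP : ∀ n, IsSq q (P n) (SP n))
    (hstruct : ∀ n : ℕ, (Polynomial.C a * Polynomial.X - Polynomial.C c) * SP n =
      (Polynomial.C (sa n) * Polynomial.X + Polynomial.C (sb n)) * P n
        + Polynomial.C (sc n) * P (n - 1))
    (k : ℕ) :
    Polynomial.C ((-1:ℂ) * (Cv (k+1)) * (Cv (k+2)) * (Cv (k+3)) * (sa (k+1)) + (2:ℂ) * (Cv (k+1)) * (Cv (k+2)) * (Cv (k+3)) * (sa (k+2)) * (alphaC q) + (-1:ℂ) * (Cv (k+1)) * (Cv (k+2)) * (Cv (k+3)) * (sa (k+3)) + (-1:ℂ) * (Cv (k+1)) * (Cv (k+2)) * (sc (k+3)) + (2:ℂ) * (Cv (k+1)) * (Cv (k+3)) * (sc (k+2)) * (alphaC q) + (-1:ℂ) * (Cv (k+2)) * (Cv (k+3)) * (sc (k+1))) * P (k) + Polynomial.C ((-1:ℂ) * (Bv (k+1))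 * (Cv (k+2)) * (Cv (k+3)) * (sa (k+1)) + (2:ℂ) * (Bv (k+1)) * (Cv (k+2)) * (Cv (k+3)) * (sa (k+2)) * (alphaC q) + (-1:ℂ) * (Bv (k+1)) * (Cv (k+2)) * (Cv (k+3)) * (sa (k+3)) + (-1:ℂ) * (Bv (k+1)) * (Cv (k+2)) * (sc (k+3)) + (2:ℂ) * (Bv (k+1)) * (Cv (k+3)) * (sc (k+2)) * (alphaC q) + (-1:ℂ) * (Bv (k+2)) * (Cv (k+2)) * (Cv (k+3)) * (sa (k+2)) + (2:ℂ) * (Bv (k+2)) * (Cv (k+2)) * (Cv (k+3)) * (sa (k+2)) * (alphaC q) + (-1:ℂ) * (Bv (k+2)) * (Cv (k+2)) * (Cv (k+3)) * (sa (k+3)) + (-1:ℂ) * (Bv (k+2)) * (Cv (k+2)) * (sc (k+3)) + (-1:ℂ) * (Bv (k+2)) * (Cv (k+3)) * (sc (k+2)) + (-1:ℂ) * (Bv (k+3)) * (Cv (k+2)) * (Cv (k+3)) * (sa (k+2)) + (-1:ℂ) * (Bv (k+3)) * (Cv (k+2)) * (Cv (k+3)) * (sa (k+3)) + (2:ℂ)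 * (Bv (k+3)) * (Cv (k+2)) * (Cv (k+3)) * (sa (k+3)) * (alphaC q) + (2:ℂ) * (Bv (k+3)) * (Cv (k+2)) * (sc (k+3)) * (alphaC q) + (-1:ℂ) * (Bv (k+3)) * (Cv (k+3)) * (sc (k+2)) + (-1:ℂ) * (Cv (k+2)) * (Cv (k+3)) * (sb (k+1)) + (2:ℂ) * (Cv (k+2)) * (Cv (k+3)) * (sb (k+2)) * (alphaC q) + (-1:ℂ) * (Cv (k+2)) * (Cv (k+3)) * (sb (k+3))) * P (k+1) + Polynomial.C ((-1:ℂ) * (Bv (k+2)) * (Bv (k+2)) * (Cv (k+3)) * (sa (k+2)) + (2:ℂ) * (Bv (k+2)) * (Bv (k+2)) * (Cv (k+3)) * (sa (k+2)) * (alphaC q) + (-1:ℂ) * (Bv (k+2)) * (Bv (k+2)) * (Cv (k+3)) * (sa (k+3)) + (-1:ℂ) * (Bv (k+2)) * (Bv (k+2)) * (sc (k+3)) + (-1:ℂ) * (Bv (k+2)) * (Bv (k+3)) * (Cv (k+3)) * (sa (k+2)) + (-1:ℂ) * (Bv (k+2)) * (Bv (k+3)) * (Cv (k+3)) * (sa (k+3))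 + (2:ℂ) * (Bv (k+2)) * (Bv (k+3)) * (Cv (k+3)) * (sa (k+3)) * (alphaC q) + (2:ℂ) * (Bv (k+2)) * (Bv (k+3)) * (sc (k+3)) * (alphaC q) + (-1:ℂ) * (Bv (k+2)) * (Cv (k+3)) * (sb (k+2)) + (2:ℂ) * (Bv (k+2)) * (Cv (k+3)) * (sb (k+2)) * (alphaC q) + (-1:ℂ) * (Bv (k+2)) * (Cv (k+3)) * (sb (k+3)) + (-2:ℂ) * (Bv (k+3)) * (Bv (k+3)) * (Cv (k+3)) * (sa (k+3)) + (2:ℂ) * (Bv (k+3)) * (Bv (k+3)) * (Cv (k+3)) * (sa (k+3)) * (alphaC q) + (-1:ℂ) * (Bv (k+3)) * (Bv (k+3)) * (sc (k+3)) + (-1:ℂ) * (Bv (k+3)) * (Cv (k+3)) * (sb (k+2)) + (-1:ℂ) * (Bv (k+3)) * (Cv (k+3)) * (sb (k+3)) + (2:ℂ) * (Bv (k+3)) * (Cv (k+3)) * (sb (k+3)) * (alphaC q) + (-1:ℂ) * (Cv (k+2)) * (Cv (k+3)) * (sa (k+1)) + (2:ℂ) * (Cv (k+2)) * (Cv (k+3))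 * (sa (k+2)) * (alphaC q) + (-1:ℂ) * (Cv (k+2)) * (Cv (k+3)) * (sa (k+3)) + (-1:ℂ) * (Cv (k+2)) * (sc (k+3)) + (2:ℂ) * (Cv (k+3)) * (Cv (k+3)) * (sa (k+2)) * (alphaC q) + (-2:ℂ) * (Cv (k+3)) * (Cv (k+3)) * (sa (k+3)) + (-2:ℂ) * (Cv (k+3)) * (Cv (k+4)) * (sa (k+3)) + (2:ℂ) * (Cv (k+3)) * (Cv (k+4)) * (sa (k+4)) * (alphaC q) + (1:ℂ) * (Cv (k+3)) * (sa (k+3)) + (-1:ℂ) * (Cv (k+3)) * (sa (k+3)) * (alphaC q) * (alphaC q) + (2:ℂ) * (Cv (k+3)) * (sc (k+2)) * (alphaC q) + (-2:ℂ) * (Cv (k+3)) * (sc (k+3)) + (2:ℂ) * (Cv (k+3)) * (sc (k+4)) * (alphaC q) + (-1:ℂ) * (Cv (k+4)) * (sc (k+3)) + (-1:ℂ) * (sc (k+3)) * (alphaC q) * (alphaC q) + (1:ℂ) * (sc (k+3))) * P (k+2) + Polynomial.C ((-1:ℂ) * (Bv (k+2)) * (Cv (k+3)) * (sa (k+2))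 + (2:ℂ) * (Bv (k+2)) * (Cv (k+3)) * (sa (k+2)) * (alphaC q) + (-1:ℂ) * (Bv (k+2)) * (Cv (k+3)) * (sa (k+3)) + (-1:ℂ) * (Bv (k+2)) * (sc (k+3)) + (-2:ℂ) * (Bv (k+3)) * (Bv (k+3)) * (Bv (k+3)) * (sa (k+3)) + (2:ℂ) * (Bv (k+3)) * (Bv (k+3)) * (Bv (k+3)) * (sa (k+3)) * (alphaC q) + (-2:ℂ) * (Bv (k+3)) * (Bv (k+3)) * (sb (k+3)) + (2:ℂ) * (Bv (k+3)) * (Bv (k+3)) * (sb (k+3)) * (alphaC q) + (-1:ℂ) * (Bv (k+3)) * (Cv (k+3)) * (sa (k+2)) + (2:ℂ) * (Bv (k+3)) * (Cv (k+3)) * (sa (k+2)) * (alphaC q) + (-3:ℂ) * (Bv (k+3)) * (Cv (k+3)) * (sa (k+3)) + (2:ℂ) * (Bv (k+3)) * (Cv (k+3)) * (sa (k+3)) * (alphaC q) + (-3:ℂ) * (Bv (k+3)) * (Cv (k+4)) * (sa (k+3)) + (2:ℂ) * (Bv (k+3)) * (Cv (k+4)) * (sa (k+3)) * (alphaC q)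 + (-1:ℂ) * (Bv (k+3)) * (Cv (k+4)) * (sa (k+4)) + (2:ℂ) * (Bv (k+3)) * (Cv (k+4)) * (sa (k+4)) * (alphaC q) + (1:ℂ) * (Bv (k+3)) * (sa (k+3)) + (-1:ℂ) * (Bv (k+3)) * (sa (k+3)) * (alphaC q) * (alphaC q) + (-1:ℂ) * (Bv (k+3)) * (sc (k+3)) + (2:ℂ) * (Bv (k+3)) * (sc (k+3)) * (alphaC q) + (-1:ℂ) * (Bv (k+3)) * (sc (k+4)) + (2:ℂ) * (Bv (k+3)) * (sc (k+4)) * (alphaC q) + (-1:ℂ) * (Bv (k+4)) * (Cv (k+4)) * (sa (k+3)) + (-1:ℂ) * (Bv (k+4)) * (Cv (k+4)) * (sa (k+4)) + (2:ℂ) * (Bv (k+4)) * (Cv (k+4)) * (sa (k+4)) * (alphaC q) + (-1:ℂ) * (Bv (k+4)) * (sc (k+4)) + (2:ℂ) * (Cv (k+3)) * (sb (k+2)) * (alphaC q) + (-2:ℂ) * (Cv (k+3)) * (sb (k+3)) + (-2:ℂ) * (Cv (k+4)) * (sb (k+3)) + (2:ℂ) * (Cv (k+4)) * (sb (k+4))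 * (alphaC q) + (-1:ℂ) * (sb (k+3)) * (alphaC q) * (alphaC q) + (1:ℂ) * (sb (k+3))) * P (k+3) + Polynomial.C ((-2:ℂ) * (Bv (k+3)) * (Bv (k+3)) * (sa (k+3)) + (2:ℂ) * (Bv (k+3)) * (Bv (k+3)) * (sa (k+3)) * (alphaC q) + (-1:ℂ) * (Bv (k+3)) * (Bv (k+4)) * (sa (k+3)) + (2:ℂ) * (Bv (k+3)) * (Bv (k+4)) * (sa (k+3)) * (alphaC q) + (-1:ℂ) * (Bv (k+3)) * (Bv (k+4)) * (sa (k+4)) + (-1:ℂ) * (Bv (k+3)) * (sb (k+3)) + (2:ℂ) * (Bv (k+3)) * (sb (k+3)) * (alphaC q) + (-1:ℂ) * (Bv (k+3)) * (sb (k+4)) + (-1:ℂ) * (Bv (k+4)) * (Bv (k+4)) * (sa (k+3)) + (-1:ℂ) * (Bv (k+4)) * (Bv (k+4)) * (sa (k+4)) + (2:ℂ) * (Bv (k+4)) * (Bv (k+4)) * (sa (k+4)) * (alphaC q) + (-1:ℂ) * (Bv (k+4)) * (sb (k+3)) + (-1:ℂ) * (Bv (k+4)) * (sb (k+4)) + (2:ℂ)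 * (Bv (k+4)) * (sb (k+4)) * (alphaC q) + (2:ℂ) * (Cv (k+3)) * (sa (k+2)) * (alphaC q) + (-2:ℂ) * (Cv (k+3)) * (sa (k+3)) + (-2:ℂ) * (Cv (k+4)) * (sa (k+3)) + (2:ℂ) * (Cv (k+4)) * (sa (k+4)) * (alphaC q) + (-1:ℂ) * (Cv (k+5)) * (sa (k+3)) + (2:ℂ) * (Cv (k+5)) * (sa (k+4)) * (alphaC q) + (-1:ℂ) * (Cv (k+5)) * (sa (k+5)) + (-1:ℂ) * (sa (k+3)) * (alphaC q) * (alphaC q) + (1:ℂ) * (sa (k+3)) + (-1:ℂ) * (sc (k+3)) + (2:ℂ) * (sc (k+4)) * (alphaC q) + (-1:ℂ) * (sc (k+5))) * P (k+4) + Polynomial.C ((-1:ℂ) * (Bv (k+3)) * (sa (k+3)) + (2:ℂ) * (Bv (k+3)) * (sa (k+3)) * (alphaC q) + (-1:ℂ) * (Bv (k+3)) * (sa (k+4)) + (-1:ℂ) * (Bv (k+4)) * (sa (k+3)) + (-1:ℂ) * (Bv (k+4)) * (sa (k+4)) + (2:ℂ) * (Bv (k+4)) * (sa (k+4)) * (alphaC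 q) + (-1:ℂ) * (Bv (k+5)) * (sa (k+3)) + (2:ℂ) * (Bv (k+5)) * (sa (k+4)) * (alphaC q) + (-1:ℂ) * (Bv (k+5)) * (sa (k+5)) + (-1:ℂ) * (sb (k+3)) + (2:ℂ) * (sb (k+4)) * (alphaC q) + (-1:ℂ) * (sb (k+5))) * P (k+5) + Polynomial.C ((-1:ℂ) * (sa (k+3)) + (2:ℂ) * (sa (k+4)) * (alphaC q) + (-1:ℂ) * (sa (k+5))) * P (k+6) = 0 := by
  apply poly_funext0
  intro z hz
  have hsp1 := hSP (k+1) z hz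
  have hsp2 := hSP (k+2) z hz
  have hsp3 := hSP (k+3) z hz
  have hsp4 := hSP (k+4) z hz
  have hsp5 := hSP (k+5) z hz
  have hst1 := congrArg (Polynomial.eval (xl z)) (hstruct (k+1))
  have hst2 := congrArg (Polynomial.eval (xl z)) (hstruct (k+2))
  have hst3 := congrArg (Polynomial.eval (xl z)) (hstruct (k+3))
  have hst4 := congrArg (Polynomial.eval (xl z)) (hstruct (k+4))
  have hst5 := congrArg (Polynomial.eval (xl z)) (hstruct (k+5))
  have hr01 := congrArg (Polynomial.eval (xl z)) (hrec k)
  have hr02 := congrArg (Polynomial.eval (xl z)) (hrec (k+1))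
  have hr03 := congrArg (Polynomial.eval (xl z)) (hrec (k+2))
  have hr04 := congrArg (Polynomial.eval (xl z)) (hrec (k+3))
  have hr05 := congrArg (Polynomial.eval (xl z)) (hrec (k+4))
  have hrp2 := congrArg (Polynomial.eval (xp q z)) (hrec (k+1))
  have hrm2 := congrArg (Polynomial.eval (xm q z)) (hrec (k+1))
  have hrp3 := congrArg (Polynomial.eval (xp q z)) (hrec (k+2))
  have hrm3 := congrArg (Polynomial.eval (xm q z)) (hrec (k+2))
  have hrp4 := congrArg (Polynomial.eval (xp q z)) (hrec (k+3))
  have hrm4 := congrArg (Polynomial.eval (xm q z)) (hrec (k+3))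
  have h1 := hx1 (q := q) z
  have h2 := hx2 hq0 hz
  simp only [Polynomial.eval_add, Polynomial.eval_sub, Polynomial.eval_mul,
    Polynomial.eval_C, Polynomial.eval_X, show k+1-1 = k from rfl, show k+2-1 = k+1 from rfl, show k+3-1 = k+2 from rfl, show k+4-1 = k+3 from rfl, show k+5-1 = k+4 from rfl] at hst1 hst2 hst3 hst4 hst5 hr01 hr02 hr03 hr04 hr05 hrp2 hrp3 hrp4 hrm2 hrm3 hrm4 ⊢
  linear_combination ((-1:ℂ) * (Cv (k+2)) * (Cv (k+3)) * (a) * (xl z) + (1:ℂ) * (Cv (k+2)) * (Cv (k+3)) * (c)) * hsp1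
    + ((-1:ℂ) * (Bv (k+2)) * (Cv (k+3)) * (a) * (xl z) + (1:ℂ) * (Bv (k+2)) * (Cv (k+3)) * (c) + (-1:ℂ) * (Bv (k+3)) * (Cv (k+3)) * (a) * (xl z) + (1:ℂ) * (Bv (k+3)) * (Cv (k+3)) * (c) + (2:ℂ) * (Cv (k+3)) * (a) * (alphaC q) * (xl z) * (xl z) + (-2:ℂ) * (Cv (k+3)) * (alphaC q) * (c) * (xl z)) * hsp2
    + ((-1:ℂ) * (a) * (alphaC q) * (alphaC q) * (xl z) + (1:ℂ) * (a) * (xl z) + (-1:ℂ) * (a) * (xl z) * (xl z) * (xl z) + (1:ℂ) * (alphaC q) * (alphaC q) * (c) + (1:ℂ) * (c) * (xl z) * (xl z) + (-1:ℂ) * (c) + (2:ℂ) * (Bv (k+3)) * (a) * (alphaC q) * (xl z) * (xl z) + (-2:ℂ) * (Bv (k+3)) * (alphaC q) * (c) * (xl z) + (-1:ℂ) * (Bv (k+3)) * (Bv (k+3)) * (a) * (xl z) + (1:ℂ) * (Bv (k+3)) * (Bv (k+3)) * (c) + (-1:ℂ) * (Cv (k+3)) * (a) * (xl z) + (1:ℂ)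 * (Cv (k+3)) * (c) + (-1:ℂ) * (Cv (k+4)) * (a) * (xl z) + (1:ℂ) * (Cv (k+4)) * (c)) * hsp3
    + ((2:ℂ) * (a) * (alphaC q) * (xl z) * (xl z) + (-2:ℂ) * (alphaC q) * (c) * (xl z) + (-1:ℂ) * (Bv (k+3)) * (a) * (xl z) + (1:ℂ) * (Bv (k+3)) * (c) + (-1:ℂ) * (Bv (k+4)) * (a) * (xl z) + (1:ℂ) * (Bv (k+4)) * (c)) * hsp4
    + ((-1:ℂ) * (a) * (xl z) + (1:ℂ) * (c)) * hsp5
    + ((1:ℂ) * (Cv (k+2)) * (Cv (k+3))) * hst1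
    + ((1:ℂ) * (Bv (k+2)) * (Cv (k+3)) + (1:ℂ) * (Bv (k+3)) * (Cv (k+3)) + (-2:ℂ) * (Cv (k+3)) * (alphaC q) * (xl z)) * hst2
    + ((1:ℂ) * (alphaC q) * (alphaC q) + (1:ℂ) * (xl z) * (xl z) + (-2:ℂ) * (Bv (k+3)) * (alphaC q) * (xl z) + (1:ℂ) * (Bv (k+3)) * (Bv (k+3)) + (1:ℂ) * (Cv (k+3)) + (1:ℂ) * (Cv (k+4)) + (-1:ℂ)) * hst3
    + ((-2:ℂ) * (alphaC q) * (xl z) + (1:ℂ) * (Bv (k+3)) + (1:ℂ) * (Bv (k+4))) * hst4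
    + ((1:ℂ)) * hst5
    + (((1:ℂ)/2) * (Cv (k+3)) * (a) * (xl z) + ((-1:ℂ)/2) * (Cv (k+3)) * (c)) * hrp2
    + ((-1:ℂ) * (a) * (alphaC q) * (xl z) * (xl z) + ((1:ℂ)/2) * (a) * (xl z) * (xp q z) + (1:ℂ) * (alphaC q) * (c) * (xl z) + ((-1:ℂ)/2) * (c) * (xp q z) + ((1:ℂ)/2) * (Bv (k+3)) * (a) * (xl z) + ((-1:ℂ)/2) * (Bv (k+3)) * (c)) * hrp3
    + (((1:ℂ)/2) * (a) * (xl z) + ((-1:ℂ)/2) * (c)) * hrp4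
    + (((1:ℂ)/2) * (Cv (k+3)) * (a) * (xl z) + ((-1:ℂ)/2) * (Cv (k+3)) * (c)) * hrm2
    + ((-1:ℂ) * (a) * (alphaC q) * (xl z) * (xl z) + ((1:ℂ)/2) * (a) * (xl z) * (xm q z) + (1:ℂ) * (alphaC q) * (c) * (xl z) + ((-1:ℂ)/2) * (c) * (xm q z) + ((1:ℂ)/2) * (Bv (k+3)) * (a) * (xl z) + ((-1:ℂ)/2) * (Bv (k+3)) * (c)) * hrm3
    + (((1:ℂ)/2) * (a) * (xl z) + ((-1:ℂ)/2) * (c)) * hrm4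
    + (((-1:ℂ)/2) * (Polynomial.eval (xm q z) (P (k+3))) * (a) * (xl z) * (xm q z) + ((1:ℂ)/2) * (Polynomial.eval (xm q z) (P (k+3))) * (c) * (xm q z) + ((-1:ℂ)/2) * (Polynomial.eval (xp q z) (P (k+3))) * (a) * (xl z) * (xp q z) + ((1:ℂ)/2) * (Polynomial.eval (xp q z) (P (k+3))) * (c) * (xp q z)) * h1
    + (((1:ℂ)/2) * (Polynomial.eval (xm q z) (P (k+3))) * (a) * (xl z) + ((-1:ℂ)/2) * (Polynomial.eval (xm q z) (P (k+3))) * (c) + ((1:ℂ)/2) * (Polynomial.eval (xp q z) (P (k+3))) * (a) * (xl z) + ((-1:ℂ)/2) * (Polynomial.eval (xp q z) (P (k+3))) * (c)) * h2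
    + ((1:ℂ) * (Cv (k+2)) * (Cv (k+3)) * (sa (k+1)) + (-2:ℂ) * (Cv (k+2)) * (Cv (k+3)) * (sa (k+2)) * (alphaC q) + (1:ℂ) * (Cv (k+2)) * (Cv (k+3)) * (sa (k+3)) + (1:ℂ) * (Cv (k+2)) * (sc (k+3)) + (-2:ℂ) * (Cv (k+3)) * (sc (k+2)) * (alphaC q)) * hr01
    + ((1:ℂ) * (Bv (k+2)) * (Cv (k+3)) * (sa (k+2)) + (-2:ℂ) * (Bv (k+2)) * (Cv (k+3)) * (sa (k+2)) * (alphaC q) + (1:ℂ) * (Bv (k+2)) * (Cv (k+3)) * (sa (k+3)) + (1:ℂ) * (Bv (k+2)) * (sc (k+3)) + (1:ℂ) * (Bv (k+3)) * (Cv (k+3)) * (sa (k+2)) + (1:ℂ) * (Bv (k+3)) * (Cv (k+3)) * (sa (k+3)) + (-2:ℂ) * (Bv (k+3)) * (Cv (k+3)) * (sa (k+3)) * (alphaC q) + (-2:ℂ) * (Bv (k+3)) * (sc (k+3)) * (alphaC q) + (-2:ℂ) * (Cv (k+3)) * (sa (k+2)) * (alphaC q) * (xl z) + (1:ℂ) *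 (Cv (k+3)) * (sa (k+3)) * (xl z) + (-2:ℂ) * (Cv (k+3)) * (sb (k+2)) * (alphaC q) + (1:ℂ) * (Cv (k+3)) * (sb (k+3)) + (1:ℂ) * (sc (k+3)) * (xl z)) * hr02
    + ((2:ℂ) * (Bv (k+3)) * (Bv (k+3)) * (sa (k+3)) + (-2:ℂ) * (Bv (k+3)) * (Bv (k+3)) * (sa (k+3)) * (alphaC q) + (-2:ℂ) * (Bv (k+3)) * (sa (k+3)) * (alphaC q) * (xl z) + (1:ℂ) * (Bv (k+3)) * (sa (k+3)) * (xl z) + (1:ℂ) * (Bv (k+3)) * (sb (k+3)) + (-2:ℂ) * (Bv (k+3)) * (sb (k+3)) * (alphaC q) + (-2:ℂ) * (Cv (k+3)) * (sa (k+2)) * (alphaC q) + (2:ℂ) * (Cv (k+3)) * (sa (k+3)) + (2:ℂ) * (Cv (k+4)) * (sa (k+3)) + (-2:ℂ) * (Cv (k+4)) * (sa (k+4)) * (alphaC q) + (1:ℂ) * (sa (k+3)) * (alphaC q) * (alphaC q) + (1:ℂ) * (sa (k+3)) * (xl z) * (xl z) + (-1:ℂ) * (sa (k+3)) + (1:ℂ)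 * (sb (k+3)) * (xl z) + (1:ℂ) * (sc (k+3)) + (-2:ℂ) * (sc (k+4)) * (alphaC q)) * hr03
    + ((1:ℂ) * (Bv (k+3)) * (sa (k+3)) + (-2:ℂ) * (Bv (k+3)) * (sa (k+3)) * (alphaC q) + (1:ℂ) * (Bv (k+3)) * (sa (k+4)) + (1:ℂ) * (Bv (k+4)) * (sa (k+3)) + (1:ℂ) * (Bv (k+4)) * (sa (k+4)) + (-2:ℂ) * (Bv (k+4)) * (sa (k+4)) * (alphaC q) + (1:ℂ) * (sa (k+3)) * (xl z) + (-2:ℂ) * (sa (k+4)) * (alphaC q) * (xl z) + (1:ℂ) * (sb (k+3)) + (-2:ℂ) * (sb (k+4)) * (alphaC q)) * hr04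
    + ((1:ℂ) * (sa (k+3)) + (-2:ℂ) * (sa (k+4)) * (alphaC q) + (1:ℂ) * (sa (k+5))) * hr05

lemma Pi2 (hq0 : 0 < q)
    (P : ℕ → Polynomial ℂ) (Bv Cv : ℕ → ℂ)
    (hrec0 : Polynomial.X * P 0 = P 1 + Polynomial.C (Bv 0) * P 0)
    (hrec : ∀ n : ℕ, Polynomial.X * P (n + 1) =
      P (n + 2) + Polynomial.C (Bv (n + 1)) * P (n + 1) + Polynomial.C (Cv (n + 1)) * P n)
    (a c : ℂ) (sa sb sc : ℕ → ℂ)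
    (SP : ℕ → Polynomial ℂ) (hSP : ∀ n, IsSq q (P n) (SP n))
    (hstruct : ∀ n : ℕ, (Polynomial.C a * Polynomial.X - Polynomial.C c) * SP n =
      (Polynomial.C (sa n) * Polynomial.X + Polynomial.C (sb n)) * P n
        + Polynomial.C (sc n) * P (n - 1)) :
    Polynomial.C ((-1:ℂ) * (Bv (0)) * (Cv (1)) * (Cv (2)) * (sa (0)) + (2:ℂ) * (Bv (0)) * (Cv (1)) * (Cv (2)) * (sa (1)) * (alphaC q) + (-1:ℂ) * (Bv (0)) * (Cv (1)) * (Cv (2)) * (sa (2)) + (-1:ℂ) * (Bv (0)) * (Cv (1)) * (sc (2)) + (2:ℂ) * (Bv (0)) * (Cv (2)) * (sc (1)) * (alphaC q) + (-1:ℂ) * (Bv (1)) * (Cv (1)) * (Cv (2)) * (sa (1)) + (2:ℂ) * (Bv (1)) * (Cv (1)) * (Cv (2)) * (sa (1)) * (alphaC q) + (-1:ℂ) * (Bv (1)) * (Cv (1)) * (Cv (2)) * (sa (2)) + (-1:ℂ) * (Bv (1)) * (Cv (1)) * (sc (2)) + (-1:ℂ) * (Bv (1)) * (Cv (2)) * (sc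 (1)) + (-1:ℂ) * (Bv (2)) * (Cv (1)) * (Cv (2)) * (sa (1)) + (-1:ℂ) * (Bv (2)) * (Cv (1)) * (Cv (2)) * (sa (2)) + (2:ℂ) * (Bv (2)) * (Cv (1)) * (Cv (2)) * (sa (2)) * (alphaC q) + (2:ℂ) * (Bv (2)) * (Cv (1)) * (sc (2)) * (alphaC q) + (-1:ℂ) * (Bv (2)) * (Cv (2)) * (sc (1)) + (-1:ℂ) * (Cv (1)) * (Cv (2)) * (sb (0)) + (2:ℂ) * (Cv (1)) * (Cv (2)) * (sb (1)) * (alphaC q) + (-1:ℂ) * (Cv (1)) * (Cv (2)) * (sb (2)) + (-1:ℂ) * (Cv (1)) * (Cv (2)) * (sc (0))) * P (0) + Polynomial.C ((-1:ℂ) * (Bv (1)) * (Bv (1)) * (Cv (2)) * (sa (1)) + (2:ℂ) * (Bv (1)) * (Bv (1)) * (Cv (2)) * (sa (1)) * (alphaC q) + (-1:ℂ) * (Bv (1)) * (Bv (1)) * (Cv (2)) * (sa (2)) + (-1:ℂ) * (Bv (1)) * (Bv (1)) * (sc (2)) + (-1:ℂ) * (Bv (1)) * (Bv (2)) * (Cv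 (2)) * (sa (1)) + (-1:ℂ) * (Bv (1)) * (Bv (2)) * (Cv (2)) * (sa (2)) + (2:ℂ) * (Bv (1)) * (Bv (2)) * (Cv (2)) * (sa (2)) * (alphaC q) + (2:ℂ) * (Bv (1)) * (Bv (2)) * (sc (2)) * (alphaC q) + (-1:ℂ) * (Bv (1)) * (Cv (2)) * (sb (1)) + (2:ℂ) * (Bv (1)) * (Cv (2)) * (sb (1)) * (alphaC q) + (-1:ℂ) * (Bv (1)) * (Cv (2)) * (sb (2)) + (-2:ℂ) * (Bv (2)) * (Bv (2)) * (Cv (2)) * (sa (2)) + (2:ℂ) * (Bv (2)) * (Bv (2)) * (Cv (2)) * (sa (2)) * (alphaC q) + (-1:ℂ) * (Bv (2)) * (Bv (2)) * (sc (2)) + (-1:ℂ) * (Bv (2)) * (Cv (2)) * (sb (1)) + (-1:ℂ) * (Bv (2)) * (Cv (2)) * (sb (2)) + (2:ℂ) * (Bv (2)) * (Cv (2)) * (sb (2)) * (alphaC q) + (-1:ℂ) * (Cv (1)) * (Cv (2)) * (sa (0)) + (2:ℂ) * (Cv (1)) * (Cv (2)) * (sa (1)) * (alphaC q) + (-1:ℂ)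 * (Cv (1)) * (Cv (2)) * (sa (2)) + (-1:ℂ) * (Cv (1)) * (sc (2)) + (2:ℂ) * (Cv (2)) * (Cv (2)) * (sa (1)) * (alphaC q) + (-2:ℂ) * (Cv (2)) * (Cv (2)) * (sa (2)) + (-2:ℂ) * (Cv (2)) * (Cv (3)) * (sa (2)) + (2:ℂ) * (Cv (2)) * (Cv (3)) * (sa (3)) * (alphaC q) + (1:ℂ) * (Cv (2)) * (sa (2)) + (-1:ℂ) * (Cv (2)) * (sa (2)) * (alphaC q) * (alphaC q) + (2:ℂ) * (Cv (2)) * (sc (1)) * (alphaC q) + (-2:ℂ) * (Cv (2)) * (sc (2)) + (2:ℂ) * (Cv (2)) * (sc (3)) * (alphaC q) + (-1:ℂ) * (Cv (3)) * (sc (2)) + (-1:ℂ) * (sc (2)) * (alphaC q) * (alphaC q) + (1:ℂ) * (sc (2))) * P (1) + Polynomial.C ((-1:ℂ) * (Bv (1)) * (Cv (2)) * (sa (1)) + (2:ℂ) * (Bv (1)) * (Cv (2)) * (sa (1)) * (alphaC q) + (-1:ℂ) * (Bv (1)) * (Cv (2)) * (sa (2)) + (-1:ℂ) * (Bv (1))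 * (sc (2)) + (-2:ℂ) * (Bv (2)) * (Bv (2)) * (Bv (2)) * (sa (2)) + (2:ℂ) * (Bv (2)) * (Bv (2)) * (Bv (2)) * (sa (2)) * (alphaC q) + (-2:ℂ) * (Bv (2)) * (Bv (2)) * (sb (2)) + (2:ℂ) * (Bv (2)) * (Bv (2)) * (sb (2)) * (alphaC q) + (-1:ℂ) * (Bv (2)) * (Cv (2)) * (sa (1)) + (2:ℂ) * (Bv (2)) * (Cv (2)) * (sa (1)) * (alphaC q) + (-3:ℂ) * (Bv (2)) * (Cv (2)) * (sa (2)) + (2:ℂ) * (Bv (2)) * (Cv (2)) * (sa (2)) * (alphaC q) + (-3:ℂ) * (Bv (2)) * (Cv (3)) * (sa (2)) + (2:ℂ) * (Bv (2)) * (Cv (3)) * (sa (2)) * (alphaC q) + (-1:ℂ) * (Bv (2)) * (Cv (3)) * (sa (3)) + (2:ℂ) * (Bv (2)) * (Cv (3)) * (sa (3)) * (alphaC q) + (1:ℂ) * (Bv (2)) * (sa (2)) + (-1:ℂ) * (Bv (2)) * (sa (2)) * (alphaC q) * (alphaC q) + (-1:ℂ) * (Bv (2)) * (sc (2)) + (2:ℂ)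 * (Bv (2)) * (sc (2)) * (alphaC q) + (-1:ℂ) * (Bv (2)) * (sc (3)) + (2:ℂ) * (Bv (2)) * (sc (3)) * (alphaC q) + (-1:ℂ) * (Bv (3)) * (Cv (3)) * (sa (2)) + (-1:ℂ) * (Bv (3)) * (Cv (3)) * (sa (3)) + (2:ℂ) * (Bv (3)) * (Cv (3)) * (sa (3)) * (alphaC q) + (-1:ℂ) * (Bv (3)) * (sc (3)) + (2:ℂ) * (Cv (2)) * (sb (1)) * (alphaC q) + (-2:ℂ) * (Cv (2)) * (sb (2)) + (-2:ℂ) * (Cv (3)) * (sb (2)) + (2:ℂ) * (Cv (3)) * (sb (3)) * (alphaC q) + (-1:ℂ) * (sb (2)) * (alphaC q) * (alphaC q) + (1:ℂ) * (sb (2))) * P (2) + Polynomial.C ((-2:ℂ) * (Bv (2)) * (Bv (2)) * (sa (2)) + (2:ℂ) * (Bv (2)) * (Bv (2)) * (sa (2)) * (alphaC q) + (-1:ℂ) * (Bv (2)) * (Bv (3)) * (sa (2)) + (2:ℂ) * (Bv (2)) * (Bv (3)) * (sa (2)) * (alphaC q) + (-1:ℂ) * (Bv (2)) * (Bv (3))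 * (sa (3)) + (-1:ℂ) * (Bv (2)) * (sb (2)) + (2:ℂ) * (Bv (2)) * (sb (2)) * (alphaC q) + (-1:ℂ) * (Bv (2)) * (sb (3)) + (-1:ℂ) * (Bv (3)) * (Bv (3)) * (sa (2)) + (-1:ℂ) * (Bv (3)) * (Bv (3)) * (sa (3)) + (2:ℂ) * (Bv (3)) * (Bv (3)) * (sa (3)) * (alphaC q) + (-1:ℂ) * (Bv (3)) * (sb (2)) + (-1:ℂ) * (Bv (3)) * (sb (3)) + (2:ℂ) * (Bv (3)) * (sb (3)) * (alphaC q) + (2:ℂ) * (Cv (2)) * (sa (1)) * (alphaC q) + (-2:ℂ) * (Cv (2)) * (sa (2)) + (-2:ℂ) * (Cv (3)) * (sa (2)) + (2:ℂ) * (Cv (3)) * (sa (3)) * (alphaC q) + (-1:ℂ) * (Cv (4)) * (sa (2)) + (2:ℂ) * (Cv (4)) * (sa (3)) * (alphaC q) + (-1:ℂ) * (Cv (4)) * (sa (4)) + (-1:ℂ) * (sa (2)) * (alphaC q) * (alphaC q) + (1:ℂ) * (sa (2)) + (-1:ℂ) * (sc (2)) + (2:ℂ) * (sc (3)) * (alphaC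 q) + (-1:ℂ) * (sc (4))) * P (3) + Polynomial.C ((-1:ℂ) * (Bv (2)) * (sa (2)) + (2:ℂ) * (Bv (2)) * (sa (2)) * (alphaC q) + (-1:ℂ) * (Bv (2)) * (sa (3)) + (-1:ℂ) * (Bv (3)) * (sa (2)) + (-1:ℂ) * (Bv (3)) * (sa (3)) + (2:ℂ) * (Bv (3)) * (sa (3)) * (alphaC q) + (-1:ℂ) * (Bv (4)) * (sa (2)) + (2:ℂ) * (Bv (4)) * (sa (3)) * (alphaC q) + (-1:ℂ) * (Bv (4)) * (sa (4)) + (-1:ℂ) * (sb (2)) + (2:ℂ) * (sb (3)) * (alphaC q) + (-1:ℂ) * (sb (4))) * P (4) + Polynomial.C ((-1:ℂ) * (sa (2)) + (2:ℂ) * (sa (3)) * (alphaC q) + (-1:ℂ) * (sa (4))) * P (5) = 0 := by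
  apply poly_funext0
  intro z hz
  have hsp0 := hSP 0 z hz
  have hsp1 := hSP 1 z hz
  have hsp2 := hSP 2 z hz
  have hsp3 := hSP 3 z hz
  have hsp4 := hSP 4 z hz
  have hst0 := congrArg (Polynomial.eval (xl z)) (hstruct 0)
  have hst1 := congrArg (Polynomial.eval (xl z)) (hstruct 1)
  have hst2 := congrArg (Polynomial.eval (xl z)) (hstruct 2)
  have hst3 := congrArg (Polynomial.eval (xl z)) (hstruct 3)
  have hst4 := congrArg (Polynomial.eval (xl z)) (hstruct 4)
  have hr00 := congrArg (Polynomial.eval (xl z)) hrec0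
  have hr01 := congrArg (Polynomial.eval (xl z)) (hrec 0)
  have hr02 := congrArg (Polynomial.eval (xl z)) (hrec 1)
  have hr03 := congrArg (Polynomial.eval (xl z)) (hrec 2)
  have hr04 := congrArg (Polynomial.eval (xl z)) (hrec 3)
  have hrp1 := congrArg (Polynomial.eval (xp q z)) (hrec 0)
  have hrm1 := congrArg (Polynomial.eval (xm q z)) (hrec 0)
  have hrp2 := congrArg (Polynomial.eval (xp q z)) (hrec 1)
  have hrm2 := congrArg (Polynomial.eval (xm q z)) (hrec 1)
  have hrp3 := congrArg (Polynomial.eval (xp q z)) (hrec 2)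
  have hrm3 := congrArg (Polynomial.eval (xm q z)) (hrec 2)
  have h1 := hx1 (q := q) z
  have h2 := hx2 hq0 hz
  simp only [Polynomial.eval_add, Polynomial.eval_sub, Polynomial.eval_mul,
    Polynomial.eval_C, Polynomial.eval_X, show (1:ℕ)-1 = 0 from rfl, show (2:ℕ)-1 = 1 from rfl, show (3:ℕ)-1 = 2 from rfl, show (4:ℕ)-1 = 3 from rfl, show (0:ℕ)-1 = 0 from rfl] at hst0 hst1 hst2 hst3 hst4 hr00 hr01 hr02 hr03 hr04 hrp1 hrp2 hrp3 hrm1 hrm2 hrm3 ⊢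
  linear_combination ((-1:ℂ) * (Cv (1)) * (Cv (2)) * (a) * (xl z) + (1:ℂ) * (Cv (1)) * (Cv (2)) * (c)) * hsp0
    + ((-1:ℂ) * (Bv (1)) * (Cv (2)) * (a) * (xl z) + (1:ℂ) * (Bv (1)) * (Cv (2)) * (c) + (-1:ℂ) * (Bv (2)) * (Cv (2)) * (a) * (xl z) + (1:ℂ) * (Bv (2)) * (Cv (2)) * (c) + (2:ℂ) * (Cv (2)) * (a) * (alphaC q) * (xl z) * (xl z) + (-2:ℂ) * (Cv (2)) * (alphaC q) * (c) * (xl z)) * hsp1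
    + ((-1:ℂ) * (a) * (alphaC q) * (alphaC q) * (xl z) + (1:ℂ) * (a) * (xl z) + (-1:ℂ) * (a) * (xl z) * (xl z) * (xl z) + (1:ℂ) * (alphaC q) * (alphaC q) * (c) + (1:ℂ) * (c) * (xl z) * (xl z) + (-1:ℂ) * (c) + (2:ℂ) * (Bv (2)) * (a) * (alphaC q) * (xl z) * (xl z) + (-2:ℂ) * (Bv (2)) * (alphaC q) * (c) * (xl z) + (-1:ℂ) * (Bv (2)) * (Bv (2)) * (a) * (xl z) + (1:ℂ) * (Bv (2)) * (Bv (2)) * (c) + (-1:ℂ) * (Cv (2)) * (a) * (xl z) + (1:ℂ) * (Cv (2)) * (c) + (-1:ℂ) * (Cv (3)) * (a) * (xl z) + (1:ℂ) * (Cv (3)) * (c)) * hsp2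
    + ((2:ℂ) * (a) * (alphaC q) * (xl z) * (xl z) + (-2:ℂ) * (alphaC q) * (c) * (xl z) + (-1:ℂ) * (Bv (2)) * (a) * (xl z) + (1:ℂ) * (Bv (2)) * (c) + (-1:ℂ) * (Bv (3)) * (a) * (xl z) + (1:ℂ) * (Bv (3)) * (c)) * hsp3
    + ((-1:ℂ) * (a) * (xl z) + (1:ℂ) * (c)) * hsp4
    + ((1:ℂ) * (Cv (1)) * (Cv (2))) * hst0
    + ((1:ℂ) * (Bv (1)) * (Cv (2)) + (1:ℂ) * (Bv (2)) * (Cv (2)) + (-2:ℂ) * (Cv (2)) * (alphaC q) * (xl z)) * hst1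
    + ((1:ℂ) * (alphaC q) * (alphaC q) + (1:ℂ) * (xl z) * (xl z) + (-2:ℂ) * (Bv (2)) * (alphaC q) * (xl z) + (1:ℂ) * (Bv (2)) * (Bv (2)) + (1:ℂ) * (Cv (2)) + (1:ℂ) * (Cv (3)) + (-1:ℂ)) * hst2
    + ((-2:ℂ) * (alphaC q) * (xl z) + (1:ℂ) * (Bv (2)) + (1:ℂ) * (Bv (3))) * hst3
    + ((1:ℂ)) * hst4
    + (((1:ℂ)/2) * (Cv (2)) * (a) * (xl z) + ((-1:ℂ)/2) * (Cv (2)) * (c)) * hrp1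
    + ((-1:ℂ) * (a) * (alphaC q) * (xl z) * (xl z) + ((1:ℂ)/2) * (a) * (xl z) * (xp q z) + (1:ℂ) * (alphaC q) * (c) * (xl z) + ((-1:ℂ)/2) * (c) * (xp q z) + ((1:ℂ)/2) * (Bv (2)) * (a) * (xl z) + ((-1:ℂ)/2) * (Bv (2)) * (c)) * hrp2
    + (((1:ℂ)/2) * (a) * (xl z) + ((-1:ℂ)/2) * (c)) * hrp3
    + (((1:ℂ)/2) * (Cv (2)) * (a) * (xl z) + ((-1:ℂ)/2) * (Cv (2)) * (c)) * hrm1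
    + ((-1:ℂ) * (a) * (alphaC q) * (xl z) * (xl z) + ((1:ℂ)/2) * (a) * (xl z) * (xm q z) + (1:ℂ) * (alphaC q) * (c) * (xl z) + ((-1:ℂ)/2) * (c) * (xm q z) + ((1:ℂ)/2) * (Bv (2)) * (a) * (xl z) + ((-1:ℂ)/2) * (Bv (2)) * (c)) * hrm2
    + (((1:ℂ)/2) * (a) * (xl z) + ((-1:ℂ)/2) * (c)) * hrm3
    + (((-1:ℂ)/2) * (Polynomial.eval (xm q z) (P (2))) * (a) * (xl z) * (xm q z) + ((1:ℂ)/2) * (Polynomial.eval (xm q z) (P (2))) * (c) * (xm q z) + ((-1:ℂ)/2) * (Polynomial.eval (xp q z) (P (2))) * (a) * (xl z) * (xp q z) + ((1:ℂ)/2) * (Polynomial.eval (xp q z) (P (2))) * (c) * (xp q z)) * h1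
    + (((1:ℂ)/2) * (Polynomial.eval (xm q z) (P (2))) * (a) * (xl z) + ((-1:ℂ)/2) * (Polynomial.eval (xm q z) (P (2))) * (c) + ((1:ℂ)/2) * (Polynomial.eval (xp q z) (P (2))) * (a) * (xl z) + ((-1:ℂ)/2) * (Polynomial.eval (xp q z) (P (2))) * (c)) * h2
    + ((1:ℂ) * (Cv (1)) * (Cv (2)) * (sa (0)) + (-2:ℂ) * (Cv (1)) * (Cv (2)) * (sa (1)) * (alphaC q) + (1:ℂ) * (Cv (1)) * (Cv (2)) * (sa (2)) + (1:ℂ) * (Cv (1)) * (sc (2)) + (-2:ℂ) * (Cv (2)) * (sc (1)) * (alphaC q)) * hr00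
    + ((1:ℂ) * (Bv (1)) * (Cv (2)) * (sa (1)) + (-2:ℂ) * (Bv (1)) * (Cv (2)) * (sa (1)) * (alphaC q) + (1:ℂ) * (Bv (1)) * (Cv (2)) * (sa (2)) + (1:ℂ) * (Bv (1)) * (sc (2)) + (1:ℂ) * (Bv (2)) * (Cv (2)) * (sa (1)) + (1:ℂ) * (Bv (2)) * (Cv (2)) * (sa (2)) + (-2:ℂ) * (Bv (2)) * (Cv (2)) * (sa (2)) * (alphaC q) + (-2:ℂ) * (Bv (2)) * (sc (2)) * (alphaC q) + (-2:ℂ) * (Cv (2)) * (sa (1)) * (alphaC q) * (xl z) + (1:ℂ) * (Cv (2)) * (sa (2)) * (xl z) + (-2:ℂ) * (Cv (2)) * (sb (1)) * (alphaC q) + (1:ℂ) * (Cv (2)) * (sb (2)) + (1:ℂ) * (sc (2)) * (xl z)) * hr01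
    + ((2:ℂ) * (Bv (2)) * (Bv (2)) * (sa (2)) + (-2:ℂ) * (Bv (2)) * (Bv (2)) * (sa (2)) * (alphaC q) + (-2:ℂ) * (Bv (2)) * (sa (2)) * (alphaC q) * (xl z) + (1:ℂ) * (Bv (2)) * (sa (2)) * (xl z) + (1:ℂ) * (Bv (2)) * (sb (2)) + (-2:ℂ) * (Bv (2)) * (sb (2)) * (alphaC q) + (-2:ℂ) * (Cv (2)) * (sa (1)) * (alphaC q) + (2:ℂ) * (Cv (2)) * (sa (2)) + (2:ℂ) * (Cv (3)) * (sa (2)) + (-2:ℂ) * (Cv (3)) * (sa (3)) * (alphaC q) + (1:ℂ) * (sa (2)) * (alphaC q) * (alphaC q) + (1:ℂ) * (sa (2)) * (xl z) * (xl z) + (-1:ℂ) * (sa (2)) + (1:ℂ) * (sb (2)) * (xl z) + (1:ℂ) * (sc (2)) + (-2:ℂ) * (sc (3)) * (alphaC q)) * hr02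
    + ((1:ℂ) * (Bv (2)) * (sa (2)) + (-2:ℂ) * (Bv (2)) * (sa (2)) * (alphaC q) + (1:ℂ) * (Bv (2)) * (sa (3)) + (1:ℂ) * (Bv (3)) * (sa (2)) + (1:ℂ) * (Bv (3)) * (sa (3)) + (-2:ℂ) * (Bv (3)) * (sa (3)) * (alphaC q) + (1:ℂ) * (sa (2)) * (xl z) + (-2:ℂ) * (sa (3)) * (alphaC q) * (xl z) + (1:ℂ) * (sb (2)) + (-2:ℂ) * (sb (3)) * (alphaC q)) * hr03
    + ((1:ℂ) * (sa (2)) + (-2:ℂ) * (sa (3)) * (alphaC q) + (1:ℂ) * (sa (4))) * hr04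

lemma extract7 (P : ℕ → Polynomial ℂ) (hmonic : ∀ n, (P n).Monic)
    (hdeg : ∀ n, (P n).natDegree = n) (k : ℕ) (d0 d1 d2 d3 d4 d5 d6 : ℂ)
    (h : Polynomial.C d0 * P (k) + Polynomial.C d1 * P (k+1) + Polynomial.C d2 * P (k+2) + Polynomial.C d3 * P (k+3) + Polynomial.C d4 * P (k+4) + Polynomial.C d5 * P (k+5) + Polynomial.C d6 * P (k+6) = 0) : d0 = 0 ∧ d1 = 0 ∧ d2 = 0 ∧ d3 = 0 ∧ d4 = 0 ∧ d5 = 0 ∧ d6 = 0 := by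
  have e6 : d6 = 0 := by
    have hco := congrArg (fun p => Polynomial.coeff p (k+6)) h
    simp only [Polynomial.coeff_add, Polynomial.coeff_C_mul, Polynomial.coeff_zero] at hco
    rw [show (P (k)).coeff (k+6) = 0 from Polynomial.coeff_eq_zero_of_natDegree_lt (by rw [hdeg]; omega), show (P (k+1)).coeff (k+6) = 0 from Polynomial.coeff_eq_zero_of_natDegree_lt (by rw [hdeg]; omega), show (P (k+2)).coeff (k+6) = 0 from Polynomial.coeff_eq_zero_of_natDegree_lt (by rw [hdeg]; omega), show (P (k+3)).coeff (k+6) = 0 from Polynomial.coeff_eq_zero_of_natDegree_lt (by rw [hdeg]; omega), show (P (k+4)).coeff (k+6) = 0 from Polynomial.coeff_eq_zero_of_natDegree_lt (by rw [hdeg]; omega), show (P (k+5)).coeff (k+6) = 0 from Polynomial.coeff_eq_zero_of_natDegree_lt (by rw [hdeg]; omega), show (P (k+6)).coeff (k+6) = 1 from (by have := hmonic (k+6); rwa [Polynomial.Monic, Polynomial.leadingCoeff, hdeg] at this)] at hco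
    linear_combination hco
  have e5 : d5 = 0 := by
    have hco := congrArg (fun p => Polynomial.coeff p (k+5)) h
    simp only [Polynomial.coeff_add, Polynomial.coeff_C_mul, Polynomial.coeff_zero] at hco
    rw [show (P (k)).coeff (k+5) = 0 from Polynomial.coeff_eq_zero_of_natDegree_lt (by rw [hdeg]; omega), show (P (k+1)).coeff (k+5) = 0 from Polynomial.coeff_eq_zero_of_natDegree_lt (by rw [hdeg]; omega), show (P (k+2)).coeff (k+5) = 0 from Polynomial.coeff_eq_zero_of_natDegree_lt (by rw [hdeg]; omega), show (P (k+3)).coeff (k+5) = 0 from Polynomial.coeff_eq_zero_of_natDegree_lt (by rw [hdeg]; omega), show (P (k+4)).coeff (k+5) = 0 from Polynomial.coeff_eq_zero_of_natDegree_lt (by rw [hdeg]; omega), show (P (k+5)).coeff (k+5) = 1 from (by have := hmonic (k+5); rwa [Polynomial.Monic, Polynomial.leadingCoeff, hdeg] at this), e6] at hco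
    linear_combination hco
  have e4 : d4 = 0 := by
    have hco := congrArg (fun p => Polynomial.coeff p (k+4)) h
    simp only [Polynomial.coeff_add, Polynomial.coeff_C_mul, Polynomial.coeff_zero] at hco
    rw [show (P (k)).coeff (k+4) = 0 from Polynomial.coeff_eq_zero_of_natDegree_lt (by rw [hdeg]; omega), show (P (k+1)).coeff (k+4) = 0 from Polynomial.coeff_eq_zero_of_natDegree_lt (by rw [hdeg]; omega), show (P (k+2)).coeff (k+4) = 0 from Polynomial.coeff_eq_zero_of_natDegree_lt (by rw [hdeg]; omega), show (P (k+3)).coeff (k+4) = 0 from Polynomial.coeff_eq_zero_of_natDegree_lt (by rw [hdeg]; omega), show (P (k+4)).coeff (k+4) = 1 from (by have := hmonic (k+4); rwa [Polynomial.Monic, Polynomial.leadingCoeff, hdeg] at this), e5, e6] at hco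
    linear_combination hco
  have e3 : d3 = 0 := by
    have hco := congrArg (fun p => Polynomial.coeff p (k+3)) h
    simp only [Polynomial.coeff_add, Polynomial.coeff_C_mul, Polynomial.coeff_zero] at hco
    rw [show (P (k)).coeff (k+3) = 0 from Polynomial.coeff_eq_zero_of_natDegree_lt (by rw [hdeg]; omega), show (P (k+1)).coeff (k+3) = 0 from Polynomial.coeff_eq_zero_of_natDegree_lt (by rw [hdeg]; omega), show (P (k+2)).coeff (k+3) = 0 from Polynomial.coeff_eq_zero_of_natDegree_lt (by rw [hdeg]; omega), show (P (k+3)).coeff (k+3) = 1 from (by have := hmonic (k+3); rwa [Polynomial.Monic, Polynomial.leadingCoeff, hdeg] at this), e4, e5, e6] at hco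
    linear_combination hco
  have e2 : d2 = 0 := by
    have hco := congrArg (fun p => Polynomial.coeff p (k+2)) h
    simp only [Polynomial.coeff_add, Polynomial.coeff_C_mul, Polynomial.coeff_zero] at hco
    rw [show (P (k)).coeff (k+2) = 0 from Polynomial.coeff_eq_zero_of_natDegree_lt (by rw [hdeg]; omega), show (P (k+1)).coeff (k+2) = 0 from Polynomial.coeff_eq_zero_of_natDegree_lt (by rw [hdeg]; omega), show (P (k+2)).coeff (k+2) = 1 from (by have := hmonic (k+2); rwa [Polynomial.Monic, Polynomial.leadingCoeff, hdeg] at this), e3, e4, e5, e6] at hco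
    linear_combination hco
  have e1 : d1 = 0 := by
    have hco := congrArg (fun p => Polynomial.coeff p (k+1)) h
    simp only [Polynomial.coeff_add, Polynomial.coeff_C_mul, Polynomial.coeff_zero] at hco
    rw [show (P (k)).coeff (k+1) = 0 from Polynomial.coeff_eq_zero_of_natDegree_lt (by rw [hdeg]; omega), show (P (k+1)).coeff (k+1) = 1 from (by have := hmonic (k+1); rwa [Polynomial.Monic, Polynomial.leadingCoeff, hdeg] at this), e2, e3, e4, e5, e6] at hco
    linear_combination hco
  have e0 : d0 = 0 := by
    have hco := congrArg (fun p => Polynomial.coeff p (k)) h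
    simp only [Polynomial.coeff_add, Polynomial.coeff_C_mul, Polynomial.coeff_zero] at hco
    rw [show (P (k)).coeff (k) = 1 from (by have := hmonic (k); rwa [Polynomial.Monic, Polynomial.leadingCoeff, hdeg] at this), e1, e2, e3, e4, e5, e6] at hco
    linear_combination hco
  exact ⟨e0, e1, e2, e3, e4, e5, e6⟩

lemma extract6 (P : ℕ → Polynomial ℂ) (hmonic : ∀ n, (P n).Monic)
    (hdeg : ∀ n, (P n).natDegree = n) (k : ℕ) (d0 d1 d2 d3 d4 d5 : ℂ)
    (h : Polynomial.C d0 * P (k) + Polynomial.C d1 * P (k+1) + Polynomial.C d2 * P (k+2) + Polynomial.C d3 * P (k+3) + Polynomial.C d4 * P (k+4) + Polynomial.C d5 * P (k+5) = 0) : d0 = 0 ∧ d1 = 0 ∧ d2 = 0 ∧ d3 = 0 ∧ d4 = 0 ∧ d5 = 0 := by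
  have e5 : d5 = 0 := by
    have hco := congrArg (fun p => Polynomial.coeff p (k+5)) h
    simp only [Polynomial.coeff_add, Polynomial.coeff_C_mul, Polynomial.coeff_zero] at hco
    rw [show (P (k)).coeff (k+5) = 0 from Polynomial.coeff_eq_zero_of_natDegree_lt (by rw [hdeg]; omega), show (P (k+1)).coeff (k+5) = 0 from Polynomial.coeff_eq_zero_of_natDegree_lt (by rw [hdeg]; omega), show (P (k+2)).coeff (k+5) = 0 from Polynomial.coeff_eq_zero_of_natDegree_lt (by rw [hdeg]; omega), show (P (k+3)).coeff (k+5) = 0 from Polynomial.coeff_eq_zero_of_natDegree_lt (by rw [hdeg]; omega), show (P (k+4)).coeff (k+5) = 0 from Polynomial.coeff_eq_zero_of_natDegree_lt (by rw [hdeg]; omega), show (P (k+5)).coeff (k+5) = 1 from (by have := hmonic (k+5); rwa [Polynomial.Monic, Polynomial.leadingCoeff, hdeg] at this)] at hco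
    linear_combination hco
  have e4 : d4 = 0 := by
    have hco := congrArg (fun p => Polynomial.coeff p (k+4)) h
    simp only [Polynomial.coeff_add, Polynomial.coeff_C_mul, Polynomial.coeff_zero] at hco
    rw [show (P (k)).coeff (k+4) = 0 from Polynomial.coeff_eq_zero_of_natDegree_lt (by rw [hdeg]; omega), show (P (k+1)).coeff (k+4) = 0 from Polynomial.coeff_eq_zero_of_natDegree_lt (by rw [hdeg]; omega), show (P (k+2)).coeff (k+4) = 0 from Polynomial.coeff_eq_zero_of_natDegree_lt (by rw [hdeg]; omega), show (P (k+3)).coeff (k+4) = 0 from Polynomial.coeff_eq_zero_of_natDegree_lt (by rw [hdeg]; omega), show (P (k+4)).coeff (k+4) = 1 from (by have := hmonic (k+4); rwa [Polynomial.Monic, Polynomial.leadingCoeff, hdeg] at this), e5] at hco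
    linear_combination hco
  have e3 : d3 = 0 := by
    have hco := congrArg (fun p => Polynomial.coeff p (k+3)) h
    simp only [Polynomial.coeff_add, Polynomial.coeff_C_mul, Polynomial.coeff_zero] at hco
    rw [show (P (k)).coeff (k+3) = 0 from Polynomial.coeff_eq_zero_of_natDegree_lt (by rw [hdeg]; omega), show (P (k+1)).coeff (k+3) = 0 from Polynomial.coeff_eq_zero_of_natDegree_lt (by rw [hdeg]; omega), show (P (k+2)).coeff (k+3) = 0 from Polynomial.coeff_eq_zero_of_natDegree_lt (by rw [hdeg]; omega), show (P (k+3)).coeff (k+3) = 1 from (by have := hmonic (k+3); rwa [Polynomial.Monic, Polynomial.leadingCoeff, hdeg] at this), e4, e5] at hco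
    linear_combination hco
  have e2 : d2 = 0 := by
    have hco := congrArg (fun p => Polynomial.coeff p (k+2)) h
    simp only [Polynomial.coeff_add, Polynomial.coeff_C_mul, Polynomial.coeff_zero] at hco
    rw [show (P (k)).coeff (k+2) = 0 from Polynomial.coeff_eq_zero_of_natDegree_lt (by rw [hdeg]; omega), show (P (k+1)).coeff (k+2) = 0 from Polynomial.coeff_eq_zero_of_natDegree_lt (by rw [hdeg]; omega), show (P (k+2)).coeff (k+2) = 1 from (by have := hmonic (k+2); rwa [Polynomial.Monic, Polynomial.leadingCoeff, hdeg] at this), e3, e4, e5] at hco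
    linear_combination hco
  have e1 : d1 = 0 := by
    have hco := congrArg (fun p => Polynomial.coeff p (k+1)) h
    simp only [Polynomial.coeff_add, Polynomial.coeff_C_mul, Polynomial.coeff_zero] at hco
    rw [show (P (k)).coeff (k+1) = 0 from Polynomial.coeff_eq_zero_of_natDegree_lt (by rw [hdeg]; omega), show (P (k+1)).coeff (k+1) = 1 from (by have := hmonic (k+1); rwa [Polynomial.Monic, Polynomial.leadingCoeff, hdeg] at this), e2, e3, e4, e5] at hco
    linear_combination hco
  have e0 : d0 = 0 := by
    have hco := congrArg (fun p => Polynomial.coeff p (k)) h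
    simp only [Polynomial.coeff_add, Polynomial.coeff_C_mul, Polynomial.coeff_zero] at hco
    rw [show (P (k)).coeff (k) = 1 from (by have := hmonic (k); rwa [Polynomial.Monic, Polynomial.leadingCoeff, hdeg] at this), e1, e2, e3, e4, e5] at hco
    linear_combination hco
  exact ⟨e0, e1, e2, e3, e4, e5⟩

end Pi

theorem stmt3 (q : ℝ) (hq0 : 0 < q) (hq1 : q < 1)
    (P : ℕ → Polynomial ℂ) (B C : ℕ → ℂ)
    (hmonic : ∀ n, (P n).Monic) (hdeg : ∀ n, (P n).natDegree = n)
    (hCne : ∀ n, 1 ≤ n → C n ≠ 0)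
    (hrec0 : Polynomial.X * P 0 = P 1 + Polynomial.C (B 0) * P 0)
    (hrec : ∀ n : ℕ, Polynomial.X * P (n + 1) =
      P (n + 2) + Polynomial.C (B (n + 1)) * P (n + 1) + Polynomial.C (C (n + 1)) * P n)
    (a c : ℂ) (sa sb sc : ℕ → ℂ) (hc0 : sc 0 = 0)
    (SP : ℕ → Polynomial ℂ) (hSP : ∀ n, IsSq q (P n) (SP n))
    (hstruct : ∀ n : ℕ, (Polynomial.C a * Polynomial.X - Polynomial.C c) * SP n =
      (Polynomial.C (sa n) * Polynomial.X + Polynomial.C (sb n)) * P n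
        + Polynomial.C (sc n) * P (n - 1)) :
    ∀ n : ℕ, 3 ≤ n →
      (sc (n) / C (n) + sa (n) - sa (n - 1)) * (B n ^ 2 - 2 * alphaC q * B n * B (n - 1) + B (n - 1) ^ 2) =
        ((sc (n + 1) / C (n + 1) + sa (n + 1) - sa (n + 1 - 1)) + (sc (n + 2) / C (n + 2) + sa (n + 2) - sa (n + 2 - 1))) * (C (n + 1) - 1/4)
          - 2 * (1 + alphaC q) * (sc (n) / C (n) + sa (n) - sa (n - 1)) * (C n - 1/4)
          + ((sc (n - 1) / C (n - 1) + sa (n - 1) - sa (n - 1 - 1)) + (sc (n - 2) / C (n - 2) + sa (n - 2) - sa (n - 2 - 1))) * (C (n - 1) - 1/4) := by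
  intro n hn
  obtain ⟨k, rfl⟩ : ∃ k, n = k + 3 := ⟨n - 3, by omega⟩
  clear hn
  have hE1 : ((-2:ℂ) * (B (k+2)) * (B (k+2)) * (sa (k+2)) + (2:ℂ) * (B (k+2)) * (B (k+2)) * (sa (k+2)) * (alphaC q) + (-1:ℂ) * (B (k+2)) * (B (k+3)) * (sa (k+2)) + (2:ℂ) * (B (k+2)) * (B (k+3)) * (sa (k+2)) * (alphaC q) + (-1:ℂ) * (B (k+2)) * (B (k+3)) * (sa (k+3)) + (-1:ℂ) * (B (k+2)) * (sb (k+2)) + (2:ℂ) * (B (k+2)) * (sb (k+2)) * (alphaC q) + (-1:ℂ) * (B (k+2)) * (sb (k+3)) + (-1:ℂ) * (B (k+3)) * (B (k+3)) * (sa (k+2)) + (-1:ℂ) * (B (k+3)) * (B (k+3)) * (sa (k+3)) + (2:ℂ) * (B (k+3)) * (B (k+3)) * (sa (k+3)) * (alphaC q) + (-1:ℂ) * (B (k+3)) * (sb (k+2)) + (-1:ℂ) * (B (k+3)) * (sb (k+3)) + (2:ℂ) * (B (k+3)) * (sb (k+3)) * (alphaC q) + (2:ℂ) * (C (k+2)) *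 (sa (k+1)) * (alphaC q) + (-2:ℂ) * (C (k+2)) * (sa (k+2)) + (-2:ℂ) * (C (k+3)) * (sa (k+2)) + (2:ℂ) * (C (k+3)) * (sa (k+3)) * (alphaC q) + (-1:ℂ) * (C (k+4)) * (sa (k+2)) + (2:ℂ) * (C (k+4)) * (sa (k+3)) * (alphaC q) + (-1:ℂ) * (C (k+4)) * (sa (k+4)) + (-1:ℂ) * (sa (k+2)) * (alphaC q) * (alphaC q) + (1:ℂ) * (sa (k+2)) + (-1:ℂ) * (sc (k+2)) + (2:ℂ) * (sc (k+3)) * (alphaC q) + (-1:ℂ) * (sc (k+4))) = 0 := by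
    cases k with
    | zero =>
      exact (extract6 P hmonic hdeg 0 _ _ _ _ _ _
        (Pi2 hq0 P B C hrec0 hrec a c sa sb sc SP hSP hstruct)).2.2.2.1
    | succ k' =>
      exact (extract7 P hmonic hdeg k' _ _ _ _ _ _ _
        (PiA hq0 P B C hrec a c sa sb sc SP hSP hstruct k')).2.2.2.2.1
  have hPiA0 := extract7 P hmonic hdeg k _ _ _ _ _ _ _
    (PiA hq0 P B C hrec a c sa sb sc SP hSP hstruct k)
  have hPiA1 := extract7 P hmonic hdeg (k+1) _ _ _ _ _ _ _
    (PiA hq0 P B C hrec a c sa sb sc SP hSP hstruct (k+1))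
  have hPiA2 := extract7 P hmonic hdeg (k+2) _ _ _ _ _ _ _
    (PiA hq0 P B C hrec a c sa sb sc SP hSP hstruct (k+2))
  have hEm1 := hPiA0.2.2.1
  have hEm3_0 := hPiA0.1
  have hEm3_1 := hPiA1.1
  have hEm3_2 := hPiA2.1
  have hA3 := sa_rec hq0 a sa (struct_sa hq0 P B C hmonic hdeg a c sa sb sc SP hSP hstruct)
  have hdiv1 : sc (k+1) / C (k+1) * C (k+1) = sc (k+1) := div_mul_cancel₀ _ (hCne (k+1) (by omega))
  have hdiv2 : sc (k+2) / C (k+2) * C (k+2) = sc (k+2) := div_mul_cancel₀ _ (hCne (k+2) (by omega))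
  have hdiv3 : sc (k+3) / C (k+3) * C (k+3) = sc (k+3) := div_mul_cancel₀ _ (hCne (k+3) (by omega))
  have hdiv4 : sc (k+4) / C (k+4) * C (k+4) = sc (k+4) := div_mul_cancel₀ _ (hCne (k+4) (by omega))
  have hdiv5 : sc (k+5) / C (k+5) * C (k+5) = sc (k+5) := div_mul_cancel₀ _ (hCne (k+5) (by omega))
  have hQ : ((1:ℂ) * (C (k+1)) * (C (k+2)) * (C (k+3)) * (C (k+4)) * (C (k+5))) ≠ 0 := by
    simp only [one_mul]
    exact mul_ne_zero (mul_ne_zero (mul_ne_zero (mul_ne_zero (hCne (k+1) (by omega))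
      (hCne (k+2) (by omega))) (hCne (k+3) (by omega))) (hCne (k+4) (by omega))) (hCne (k+5) (by omega))
  simp only [show k+3-1 = k+2 from rfl, show k+3+1 = k+4 from rfl, show k+4-1 = k+3 from rfl, show k+3+2 = k+5 from rfl, show k+5-1 = k+4 from rfl, show k+3-2 = k+1 from rfl, show k+2-1 = k+1 from rfl, show k+1-1 = k from rfl]
  refine mul_left_cancel₀ hQ ?_
  linear_combination ((-1:ℂ) * (C (k+2)) * (C (k+2)) * (C (k+3)) * (C (k+4)) * (C (k+5)) + ((1:ℂ)/4) * (C (k+2)) * (C (k+3)) * (C (k+4)) * (C (k+5))) * hdiv1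
    + ((-1:ℂ) * (C (k+1)) * (C (k+2)) * (C (k+3)) * (C (k+4)) * (C (k+5)) + ((1:ℂ)/4) * (C (k+1)) * (C (k+3)) * (C (k+4)) * (C (k+5))) * hdiv2
    + ((1:ℂ) * (B (k+2)) * (B (k+2)) * (C (k+1)) * (C (k+2)) * (C (k+4)) * (C (k+5)) + (-2:ℂ) * (B (k+2)) * (B (k+3)) * (C (k+1)) * (C (k+2)) * (C (k+4)) * (C (k+5)) * (alphaC q) + (1:ℂ) * (B (k+3)) * (B (k+3)) * (C (k+1)) * (C (k+2)) * (C (k+4)) * (C (k+5)) + (2:ℂ) * (C (k+1)) * (C (k+2)) * (C (k+3)) * (C (k+4)) * (C (k+5)) + (2:ℂ) * (C (k+1)) * (C (k+2)) * (C (k+3)) * (C (k+4)) * (C (k+5)) * (alphaC q) + ((-1:ℂ)/2) * (C (k+1)) * (C (k+2)) * (C (k+4)) * (C (k+5)) + ((-1:ℂ)/2) * (C (k+1)) * (C (k+2)) * (C (k+4)) * (C (k+5)) * (alphaC q)) * hdiv3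
    + ((-1:ℂ) * (C (k+1)) * (C (k+2)) * (C (k+3)) * (C (k+4)) * (C (k+5)) + ((1:ℂ)/4) * (C (k+1)) * (C (k+2)) * (C (k+3)) * (C (k+5))) * hdiv4
    + (((1:ℂ)/4) * (C (k+1)) * (C (k+2)) * (C (k+3)) * (C (k+4)) + (-1:ℂ) * (C (k+1)) * (C (k+2)) * (C (k+3)) * (C (k+4)) * (C (k+4))) * hdiv5
    + ((1:ℂ) * (C (k+1)) * (C (k+2)) * (C (k+3)) * (C (k+4)) * (C (k+5))) * hE1
    + ((-1:ℂ) * (C (k+1)) * (C (k+2)) * (C (k+4)) * (C (k+5))) * hEm1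
    + ((1:ℂ) * (C (k+2)) * (C (k+4)) * (C (k+5)) + ((-1:ℂ)/4) * (C (k+4)) * (C (k+5))) * hEm3_0
    + (((-1:ℂ)/4) * (C (k+1)) * (C (k+5)) + ((-1:ℂ)/2) * (C (k+1)) * (C (k+5)) * (alphaC q)) * hEm3_1
    + (((-1:ℂ)/4) * (C (k+1)) * (C (k+2)) + (1:ℂ) * (C (k+1)) * (C (k+2)) * (C (k+4))) * hEm3_2
    + ((1:ℂ) * (C (k+1)) * (C (k+2)) * (C (k+2)) * (C (k+3)) * (C (k+4)) * (C (k+5)) + ((-1:ℂ)/4) * (C (k+1)) * (C (k+2)) * (C (k+3)) * (C (k+4)) * (C (k+5))) * (hA3 k)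
    + (((-1:ℂ)/4) * (C (k+1)) * (C (k+2)) * (C (k+3)) * (C (k+4)) * (C (k+5)) + ((-1:ℂ)/2) * (C (k+1)) * (C (k+2)) * (C (k+3)) * (C (k+4)) * (C (k+5)) * (alphaC q)) * (hA3 (k+1))
    + ((1:ℂ) * (C (k+1)) * (C (k+2)) * (C (k+3)) * (C (k+4)) * (C (k+4)) * (C (k+5)) + ((-1:ℂ)/4) * (C (k+1)) * (C (k+2)) * (C (k+3)) * (C (k+4)) * (C (k+5))) * (hA3 (k+2))
end

section
/- Fix s ∈ {1, −1}. Define the monic Al-Salam–Chihara polynomials Q_n = Q_n(x; s, s q^{1/2} | q) by Q_{−1} = 0, Q_0 = 1 and Q_{n+1} = (X − B_n)·Q_n − C_n·Q_{n−1}, where B_n = (s/2)(1 + q^{1/2})·q^n and C_n = (1/4)(1 − q^n)(1 − q^{n−1/2}). Then for every n ≥ 0: S_q Q_n = α_n·Q_n + c_n·Q_{n−1}, where c_n = s(1 − q^n)(1 − q^{n−1/2})/(4 q^{n/2}) (so c_0 = 0). -/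
noncomputable section

/-- Recurrence coefficient `B_n` of the monic Al-Salam--Chihara polynomials
`Q_n(x; s, s q^{1/2} | q)`. -/
def ascB (q : ℝ) (s : ℂ) (n : ℕ) : ℂ := s/2 * (1 + rp q (1/2)) * rp q (n : ℝ)

/-- Recurrence coefficient `C_n` of the monic Al-Salam--Chihara polynomials. -/
def ascC (q : ℝ) (n : ℕ) : ℂ := 1/4 * (1 - rp q (n : ℝ)) * (1 - rp q ((n : ℝ) - 1/2))

/-- The monic Al-Salam--Chihara polynomials `Q_n(x; s, s q^{1/2} | q)` (with `Q_{-1} = 0`). -/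
noncomputable def ascQ (q : ℝ) (s : ℂ) : ℕ → Polynomial ℂ
  | 0 => 1
  | 1 => Polynomial.X - Polynomial.C (ascB q s 0)
  | (n + 2) => (Polynomial.X - Polynomial.C (ascB q s (n + 1))) * ascQ q s (n + 1)
      - Polynomial.C (ascC q (n + 1)) * ascQ q s n

/-- The coefficient `c_n` in the structure relation for Al-Salam--Chihara polynomials. -/
def ascc (q : ℝ) (s : ℂ) (n : ℕ) : ℂ :=
  s * (1 - rp q (n : ℝ)) * (1 - rp q ((n : ℝ) - 1/2)) / (4 * rp q ((n : ℝ)/2))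

end


noncomputable section
def pq (q : ℝ) : ℂ := rp q (1/2)
def qpoch (q : ℝ) (m : ℕ) : ℂ := ∏ j ∈ Finset.range m, (1 - pq q ^ (j+1))
def acoefN (q : ℝ) (s : ℂ) (n k : ℕ) : ℂ :=
  if k ≤ n then (-s)^(n-k) * (2:ℂ)⁻¹^n * qpoch q (2*n) / (qpoch q (n-k) * qpoch q (n+k))
  else 0
end

section AuxASC
variable {q : ℝ} {s : ℂ}


lemma pq_pow (hq0 : 0 < q) (m : ℕ) : pq q ^ m = rp q ((m : ℝ)/2) := by
  unfold pq rp
  rw [← Complex.ofReal_pow, ← Real.rpow_natCast (q ^ ((1:ℝ)/2)) m, ← Real.rpow_mul hq0.le]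
  ring_nf

lemma rp_neg (hq0 : 0 < q) (r : ℝ) : rp q (-r) = (rp q r)⁻¹ := by
  unfold rp
  rw [Real.rpow_neg hq0.le, Complex.ofReal_inv]

lemma rp_nat (hq0 : 0 < q) (m : ℕ) : rp q (m : ℝ) = pq q ^ (2*m) := by
  rw [pq_pow hq0]
  congr 1
  push_cast; ring

lemma rp_sub_half (hq0 : 0 < q) (m : ℕ) : rp q (((m+1 : ℕ) : ℝ) - 1/2) = pq q ^ (2*m+1) := by
  rw [pq_pow hq0]
  congr 1
  push_cast; ring

lemma pq_ne (hq0 : 0 < q) : pq q ≠ 0 := by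
  unfold pq rp
  simp only [ne_eq, Complex.ofReal_eq_zero]
  exact (Real.rpow_pos_of_pos hq0 _).ne'

lemma pq_pow_lt_one (hq0 : 0 < q) (hq1 : q < 1) (j : ℕ) (hj : 1 ≤ j) :
    (1 : ℂ) - pq q ^ j ≠ 0 := by
  unfold pq rp
  rw [← Complex.ofReal_pow]
  have h1 : q ^ ((1:ℝ)/2) < 1 := Real.rpow_lt_one hq0.le hq1 (by norm_num)
  have h0 : 0 < q ^ ((1:ℝ)/2) := Real.rpow_pos_of_pos hq0 _
  have : (q ^ ((1:ℝ)/2)) ^ j < 1 := pow_lt_one₀ h0.le h1 (by omega)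
  intro h
  have := sub_eq_zero.mp h
  rw [← Complex.ofReal_one, Complex.ofReal_inj] at this
  linarith

lemma qpoch_ne (hq0 : 0 < q) (hq1 : q < 1) (m : ℕ) : qpoch q m ≠ 0 := by
  unfold qpoch
  exact Finset.prod_ne_zero_iff.mpr fun j _ => pq_pow_lt_one hq0 hq1 (j+1) (by omega)

lemma qpoch_succ (m : ℕ) : qpoch q (m+1) = qpoch q m * (1 - pq q ^ (m+1)) :=
  Finset.prod_range_succ _ _

lemma acoefN_le (n k : ℕ) (h : k ≤ n) : acoefN q s n k =
    (-s)^(n-k) * (2:ℂ)⁻¹^n * qpoch q (2*n) / (qpoch q (n-k) * qpoch q (n+k)) := by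
  unfold acoefN; rw [if_pos h]

lemma acoefN_gt (n k : ℕ) (h : n < k) : acoefN q s n k = 0 := by
  unfold acoefN; rw [if_neg (by omega)]

lemma alphaN_eq (hq0 : 0 < q) (n : ℕ) :
    alphaN q n = (pq q ^ n + (pq q ^ n)⁻¹) / 2 := by
  unfold alphaN
  rw [rp_neg hq0, ← pq_pow hq0]

lemma alphaN_eq' (hq0 : 0 < q) (n : ℕ) :
    alphaN q n = (pq q ^ n * pq q ^ n + 1) / (2 * pq q ^ n) := by
  rw [alphaN_eq hq0]
  have h : pq q ^ n ≠ 0 := pow_ne_zero _ (pq_ne hq0)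
  field_simp

lemma ascc_eq (hq0 : 0 < q) (m : ℕ) : ascc q s (m+1) =
    s * (1 - pq q^(2*(m+1))) * (1 - pq q^(2*m+1)) / (4 * pq q^(m+1)) := by
  unfold ascc
  rw [show (((m+1:ℕ)) : ℝ) = ((m+1 : ℕ) : ℝ) from rfl, rp_sub_half hq0, rp_nat hq0,
    ← pq_pow hq0]

lemma ascc_zero (hq0 : 0 < q) : ascc q s 0 = 0 := by
  unfold ascc rp
  norm_num

-- identity (A)
theorem idA (hq0 : 0 < q) (hq1 : q < 1) (hs : s = 1 ∨ s = -1) (n k : ℕ) :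
    alphaN q n * acoefN q s n k + ascc q s n * acoefN q s (n-1) k
      = acoefN q s n k * ((pq q ^ k + (pq q ^ k)⁻¹)/2) := by
  rcases lt_trichotomy k n with hk | rfl | hk
  · -- main case k < n
    obtain ⟨d, rfl⟩ : ∃ d, n = k + d + 1 := ⟨n - k - 1, by omega⟩
    rw [acoefN_le _ _ (by omega), acoefN_le _ _ (by omega)]
    rw [show k + d + 1 - k = d + 1 from by omega, show k + d + 1 + k = 2*k + d + 1 from by omega,
      show k + d + 1 - 1 = k + d from by omega, show k + d - k = d from by omega,
      show k + d + k = 2*k + d from by omega,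
      show 2*(k+d+1) = (2*k + 2*d + 1) + 1 from by ring,
      show 2*(k+d) = 2*k + 2*d from by ring,
      qpoch_succ, show 2*k+2*d+1 = (2*k+2*d)+1 from rfl, qpoch_succ, qpoch_succ, qpoch_succ,
      alphaN_eq' hq0, ascc_eq hq0]
    have r1 : pq q ^ (d+1) = pq q ^ d * pq q := by ring
    have r2 : pq q ^ (2*k+d+1) = pq q ^ k * pq q ^ k * pq q ^ d * pq q := by ring
    have r3 : pq q ^ ((2*k+2*d)+1) = pq q ^ k * pq q ^ k * pq q ^ d * pq q ^ d * pq q := by ring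
    have r4 : pq q ^ ((2*k+2*d)+1+1)
        = pq q ^ k * pq q ^ k * pq q ^ d * pq q ^ d * pq q * pq q := by ring
    have r5 : pq q ^ (2*(k+d)+1) = pq q ^ k * pq q ^ k * pq q ^ d * pq q ^ d * pq q := by ring
    have r7 : pq q ^ (k+d+1) = pq q ^ k * pq q ^ d * pq q := by ring
    rw [r1, r2, r3, r4, r5, r7, pow_succ (-s) d, pow_succ ((2:ℂ)⁻¹) (k+d)]
    have hp := pq_ne hq0
    have hX : pq q ^ k ≠ 0 := pow_ne_zero _ hp
    have hY : pq q ^ d ≠ 0 := pow_ne_zero _ hp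
    have e1 := qpoch_ne hq0 hq1 d
    have e2 := qpoch_ne hq0 hq1 (2*k+d)
    have f1 : (1:ℂ) - pq q ^ d * pq q ≠ 0 := by
      rw [← r1]; exact pq_pow_lt_one hq0 hq1 _ (by omega)
    have f2 : (1:ℂ) - pq q ^ k * pq q ^ k * pq q ^ d * pq q ≠ 0 := by
      rw [← r2]; exact pq_pow_lt_one hq0 hq1 _ (by omega)
    have rhs_eq : (pq q ^ k + (pq q ^ k)⁻¹)/2 = (pq q ^ k * pq q ^ k + 1)/(2 * pq q ^ k) := by
      field_simp
    rw [rhs_eq]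
    have hd1 : (2 * (pq q ^ k * pq q ^ d * pq q)) *
        (qpoch q d * (1 - pq q ^ d * pq q) *
          (qpoch q (2*k+d) * (1 - pq q ^ k * pq q ^ k * pq q ^ d * pq q))) ≠ 0 := by
      norm_num [mul_eq_zero, hp, hX, hY, e1, e2, f1, f2]
    have hd2 : (4 * (pq q ^ k * pq q ^ d * pq q)) * (qpoch q d * qpoch q (2*k+d)) ≠ 0 := by
      norm_num [mul_eq_zero, hp, hX, hY, e1, e2]
    have hd3 : (qpoch q d * (1 - pq q ^ d * pq q) *
          (qpoch q (2*k+d) * (1 - pq q ^ k * pq q ^ k * pq q ^ d * pq q))) * (2 * pq q ^ k) ≠ 0 := by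
      norm_num [mul_eq_zero, hp, hX, hY, e1, e2, f1, f2]
    rw [div_mul_div_comm, div_mul_div_comm, div_mul_div_comm,
      div_add_div _ _ hd1 hd2, div_eq_div_iff (mul_ne_zero hd1 hd2) hd3]
    ring
  · -- k = n
    rcases k with _ | m
    · rw [ascc_zero hq0, alphaN_eq hq0]
      ring
    · rw [acoefN_gt (m+1-1) (m+1) (by omega), alphaN_eq hq0]
      ring
  · rw [acoefN_gt n k hk, acoefN_gt (n-1) k (by omega)]
    ring

noncomputable def acoef (q : ℝ) (s : ℂ) (n : ℕ) (k : ℤ) : ℂ := acoefN q s n k.natAbs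

lemma qpoch_zero : qpoch q 0 = 1 := Finset.prod_range_zero _

lemma qpoch_one : qpoch q 1 = 1 - pq q := by
  rw [show (1:ℕ) = 0 + 1 from rfl, qpoch_succ, qpoch_zero, one_mul, pow_one]

lemma acoefN_diag (hq0 : 0 < q) (hq1 : q < 1) (n : ℕ) : acoefN q s n n = 2⁻¹ ^ n := by
  rw [acoefN_le n n le_rfl, Nat.sub_self, show n + n = 2*n from by ring, qpoch_zero,
    pow_zero, one_mul, one_mul, mul_div_assoc, div_self (qpoch_ne hq0 hq1 (2*n)), mul_one]

lemma ascB_eq (hq0 : 0 < q) (m : ℕ) :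
    ascB q s m = s * (1 + pq q) * pq q ^ (2*m) / 2 := by
  unfold ascB
  rw [rp_nat hq0]
  show s/2 * (1 + pq q) * pq q ^ (2*m) = _
  ring

lemma ascC_eq (hq0 : 0 < q) (m : ℕ) :
    ascC q (m+1) = (1 - pq q ^ (2*(m+1))) * (1 - pq q ^ (2*m+1)) / 4 := by
  unfold ascC
  rw [rp_nat hq0, rp_sub_half hq0]
  ring

lemma idB_main (hq0 : 0 < q) (hq1 : q < 1) (hs : s = 1 ∨ s = -1) (K e : ℕ) :
    acoefN q s (K+e+3) (K+1)
      = (acoefN q s (K+e+2) K + acoefN q s (K+e+2) (K+2))/2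
        - ascB q s (K+e+2) * acoefN q s (K+e+2) (K+1)
        - ascC q (K+e+2) * acoefN q s (K+e+1) (K+1) := by
  have hp := pq_ne hq0
  rw [acoefN_le (K+e+3) (K+1) (by omega), acoefN_le (K+e+2) K (by omega),
    acoefN_le (K+e+2) (K+2) (by omega), acoefN_le (K+e+2) (K+1) (by omega),
    acoefN_le (K+e+1) (K+1) (by omega)]
  rw [show K+e+3-(K+1) = e+2 from by omega, show K+e+3+(K+1) = 2*K+e+4 from by omega,
    show 2*(K+e+3) = 2*K+2*e+6 from by ring,
    show K+e+2-K = e+2 from by omega, show K+e+2+K = 2*K+e+2 from by omega,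
    show 2*(K+e+2) = 2*K+2*e+4 from by ring,
    show K+e+2-(K+2) = e from by omega, show K+e+2+(K+2) = 2*K+e+4 from by omega,
    show K+e+2-(K+1) = e+1 from by omega, show K+e+2+(K+1) = 2*K+e+3 from by omega,
    show K+e+1-(K+1) = e from by omega, show K+e+1+(K+1) = 2*K+e+2 from by omega,
    show 2*(K+e+1) = 2*K+2*e+2 from by ring]
  have W1 : qpoch q (e+1) = qpoch q e * (1 - pq q^e * pq q) := by
    rw [qpoch_succ, show pq q^(e+1) = pq q^e * pq q from by ring]
  have W2 : qpoch q (e+2) = qpoch q e * (1 - pq q^e * pq q) * (1 - pq q^e * pq q^2) := by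
    rw [show e+2 = e+1+1 from rfl, qpoch_succ, W1,
      show pq q^(e+1+1) = pq q^e * pq q^2 from by ring]
  have W3 : qpoch q (2*K+e+3) = qpoch q (2*K+e+2) * (1 - (pq q^K)^2 * pq q^e * pq q^3) := by
    rw [show 2*K+e+3 = (2*K+e+2)+1 from by omega, qpoch_succ,
      show pq q^((2*K+e+2)+1) = (pq q^K)^2 * pq q^e * pq q^3 from by ring]
  have W4 : qpoch q (2*K+e+4) = qpoch q (2*K+e+2) * (1 - (pq q^K)^2 * pq q^e * pq q^3)
      * (1 - (pq q^K)^2 * pq q^e * pq q^4) := by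
    rw [show 2*K+e+4 = (2*K+e+3)+1 from by omega, qpoch_succ, W3,
      show pq q^((2*K+e+3)+1) = (pq q^K)^2 * pq q^e * pq q^4 from by ring]
  have W5 : qpoch q (2*K+2*e+3) = qpoch q (2*K+2*e+2)
      * (1 - (pq q^K)^2 * (pq q^e)^2 * pq q^3) := by
    rw [show 2*K+2*e+3 = (2*K+2*e+2)+1 from by omega, qpoch_succ,
      show pq q^((2*K+2*e+2)+1) = (pq q^K)^2 * (pq q^e)^2 * pq q^3 from by ring]
  have W6 : qpoch q (2*K+2*e+4) = qpoch q (2*K+2*e+2)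
      * (1 - (pq q^K)^2 * (pq q^e)^2 * pq q^3) * (1 - (pq q^K)^2 * (pq q^e)^2 * pq q^4) := by
    rw [show 2*K+2*e+4 = (2*K+2*e+3)+1 from by omega, qpoch_succ, W5,
      show pq q^((2*K+2*e+3)+1) = (pq q^K)^2 * (pq q^e)^2 * pq q^4 from by ring]
  have W7 : qpoch q (2*K+2*e+6) = qpoch q (2*K+2*e+2)
      * (1 - (pq q^K)^2 * (pq q^e)^2 * pq q^3) * (1 - (pq q^K)^2 * (pq q^e)^2 * pq q^4)
      * (1 - (pq q^K)^2 * (pq q^e)^2 * pq q^5) * (1 - (pq q^K)^2 * (pq q^e)^2 * pq q^6) := by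
    rw [show 2*K+2*e+6 = (2*K+2*e+5)+1 from by omega, qpoch_succ,
      show 2*K+2*e+5 = (2*K+2*e+4)+1 from by omega, qpoch_succ, W6,
      show pq q^((2*K+2*e+4)+1) = (pq q^K)^2 * (pq q^e)^2 * pq q^5 from by ring,
      show pq q^((2*K+2*e+5)+1) = (pq q^K)^2 * (pq q^e)^2 * pq q^6 from by ring]
  have b0 : ascB q s (K+e+2) = s * (1 + pq q) * ((pq q^K)^2 * (pq q^e)^2 * pq q^4) / 2 := by
    rw [ascB_eq hq0, show pq q^(2*(K+e+2)) = (pq q^K)^2 * (pq q^e)^2 * pq q^4 from by ring]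
  have c0 : ascC q (K+e+2) = (1 - (pq q^K)^2 * (pq q^e)^2 * pq q^4)
      * (1 - (pq q^K)^2 * (pq q^e)^2 * pq q^3) / 4 := by
    rw [show K+e+2 = (K+e+1)+1 from rfl, ascC_eq hq0,
      show pq q^(2*((K+e+1)+1)) = (pq q^K)^2 * (pq q^e)^2 * pq q^4 from by ring,
      show pq q^(2*(K+e+1)+1) = (pq q^K)^2 * (pq q^e)^2 * pq q^3 from by ring]
  rw [W2, W4, W7, W6, W1, W3, b0, c0]
  rw [show (-s)^(e+2) = (-s)^e*((-s)*(-s)) from by ring,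
    show (-s)^(e+1) = (-s)^e*(-s) from by ring,
    show ((2:ℂ)⁻¹)^(K+e+3) = 2⁻¹^(K+e+1)*(2⁻¹*2⁻¹) from by ring,
    show ((2:ℂ)⁻¹)^(K+e+2) = 2⁻¹^(K+e+1)*2⁻¹ from by ring]
  have hQ1 := qpoch_ne hq0 hq1 e
  have hQ2 := qpoch_ne hq0 hq1 (2*K+e+2)
  have f1 : (1:ℂ) - pq q^e * pq q ≠ 0 := by
    have h := pq_pow_lt_one hq0 hq1 (e+1) (by omega)
    rwa [show pq q^(e+1) = pq q^e * pq q from by ring] at h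
  have f2 : (1:ℂ) - pq q^e * pq q^2 ≠ 0 := by
    have h := pq_pow_lt_one hq0 hq1 (e+2) (by omega)
    rwa [show pq q^(e+2) = pq q^e * pq q^2 from by ring] at h
  have f3 : (1:ℂ) - (pq q^K)^2 * pq q^e * pq q^3 ≠ 0 := by
    have h := pq_pow_lt_one hq0 hq1 (2*K+e+3) (by omega)
    rwa [show pq q^(2*K+e+3) = (pq q^K)^2 * pq q^e * pq q^3 from by ring] at h
  have f4 : (1:ℂ) - (pq q^K)^2 * pq q^e * pq q^4 ≠ 0 := by
    have h := pq_pow_lt_one hq0 hq1 (2*K+e+4) (by omega)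
    rwa [show pq q^(2*K+e+4) = (pq q^K)^2 * pq q^e * pq q^4 from by ring] at h
  have hD1 : qpoch q e * (1 - pq q^e * pq q) * (1 - pq q^e * pq q^2) * qpoch q (2*K+e+2) ≠ 0 := by
    norm_num [mul_eq_zero, hQ1, hQ2, f1, f2]
  have hD2 : qpoch q e * (qpoch q (2*K+e+2) * (1 - (pq q^K)^2 * pq q^e * pq q^3)
      * (1 - (pq q^K)^2 * pq q^e * pq q^4)) ≠ 0 := by
    norm_num [mul_eq_zero, hQ1, hQ2, f3, f4]
  have hD3 : qpoch q e * (1 - pq q^e * pq q)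
      * (qpoch q (2*K+e+2) * (1 - (pq q^K)^2 * pq q^e * pq q^3)) ≠ 0 := by
    norm_num [mul_eq_zero, hQ1, hQ2, f1, f3]
  have hD4 : qpoch q e * qpoch q (2*K+e+2) ≠ 0 := mul_ne_zero hQ1 hQ2
  have hDL : qpoch q e * (1 - pq q^e * pq q) * (1 - pq q^e * pq q^2)
      * (qpoch q (2*K+e+2) * (1 - (pq q^K)^2 * pq q^e * pq q^3)
        * (1 - (pq q^K)^2 * pq q^e * pq q^4)) ≠ 0 := by
    norm_num [mul_eq_zero, hQ1, hQ2, f1, f2, f3, f4]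
  have hA : qpoch q e * (1 - pq q^e * pq q) * (1 - pq q^e * pq q^2) * qpoch q (2*K+e+2)
      * (qpoch q e * (qpoch q (2*K+e+2) * (1 - (pq q^K)^2 * pq q^e * pq q^3)
      * (1 - (pq q^K)^2 * pq q^e * pq q^4))) * 2 ≠ 0 :=
    mul_ne_zero (mul_ne_zero hD1 hD2) two_ne_zero
  have hB3 : (2:ℂ) * (qpoch q e * (1 - pq q^e * pq q)
      * (qpoch q (2*K+e+2) * (1 - (pq q^K)^2 * pq q^e * pq q^3))) ≠ 0 :=
    mul_ne_zero two_ne_zero hD3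
  have hC4 : (4:ℂ) * (qpoch q e * qpoch q (2*K+e+2)) ≠ 0 :=
    mul_ne_zero (by norm_num) hD4
  rw [div_add_div _ _ hD1 hD2, div_div, div_mul_div_comm, div_mul_div_comm,
    div_sub_div _ _ hA hB3, div_sub_div _ _ (mul_ne_zero hA hB3) hC4,
    div_eq_div_iff hDL (mul_ne_zero (mul_ne_zero hA hB3) hC4)]
  rcases hs with rfl | rfl <;> ring

lemma idB_top (hq0 : 0 < q) (hq1 : q < 1) (n : ℕ) :
    acoefN q s (n+2) (n+2)
      = (acoefN q s (n+1) (n+1) + acoefN q s (n+1) (n+3))/2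
        - ascB q s (n+1) * acoefN q s (n+1) (n+2)
        - ascC q (n+1) * acoefN q s n (n+2) := by
  rw [acoefN_diag hq0 hq1, acoefN_diag hq0 hq1, acoefN_gt (n+1) (n+3) (by omega),
    acoefN_gt (n+1) (n+2) (by omega), acoefN_gt n (n+2) (by omega)]
  ring

lemma idB_sub (hq0 : 0 < q) (hq1 : q < 1) (hs : s = 1 ∨ s = -1) (n : ℕ) :
    acoefN q s (n+2) (n+1)
      = (acoefN q s (n+1) n + acoefN q s (n+1) (n+2))/2
        - ascB q s (n+1) * acoefN q s (n+1) (n+1)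
        - ascC q (n+1) * acoefN q s n (n+1) := by
  rw [acoefN_le (n+2) (n+1) (by omega), acoefN_le (n+1) n (by omega),
    acoefN_gt (n+1) (n+2) (by omega), acoefN_gt n (n+1) (by omega), acoefN_diag hq0 hq1]
  rw [show n+2-(n+1) = 1 from by omega, show n+2+(n+1) = 2*n+3 from by omega,
    show 2*(n+2) = 2*n+4 from by ring, show n+1-n = 1 from by omega,
    show n+1+n = 2*n+1 from by omega, show 2*(n+1) = 2*n+2 from by ring, qpoch_one]
  have W1 : qpoch q (2*n+2) = qpoch q (2*n+1) * (1 - (pq q^n)^2 * pq q^2) := by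
    rw [show 2*n+2 = (2*n+1)+1 from by omega, qpoch_succ,
      show pq q^((2*n+1)+1) = (pq q^n)^2 * pq q^2 from by ring]
  have W2 : qpoch q (2*n+3) = qpoch q (2*n+1) * (1 - (pq q^n)^2 * pq q^2)
      * (1 - (pq q^n)^2 * pq q^3) := by
    rw [show 2*n+3 = (2*n+2)+1 from by omega, qpoch_succ, W1,
      show pq q^((2*n+2)+1) = (pq q^n)^2 * pq q^3 from by ring]
  have W3 : qpoch q (2*n+4) = qpoch q (2*n+1) * (1 - (pq q^n)^2 * pq q^2)
      * (1 - (pq q^n)^2 * pq q^3) * (1 - (pq q^n)^2 * pq q^4) := by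
    rw [show 2*n+4 = (2*n+3)+1 from by omega, qpoch_succ, W2,
      show pq q^((2*n+3)+1) = (pq q^n)^2 * pq q^4 from by ring]
  have b0 : ascB q s (n+1) = s * (1 + pq q) * ((pq q^n)^2 * pq q^2) / 2 := by
    rw [ascB_eq hq0, show pq q^(2*(n+1)) = (pq q^n)^2 * pq q^2 from by ring]
  rw [W3, W2, W1, b0,
    show ((2:ℂ)⁻¹)^(n+2) = 2⁻¹^(n+1)*2⁻¹ from by ring]
  have hQ1 := qpoch_ne hq0 hq1 (2*n+1)
  have f0 : (1:ℂ) - pq q ≠ 0 := by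
    have h := pq_pow_lt_one hq0 hq1 1 le_rfl
    rwa [pow_one] at h
  have f1 : (1:ℂ) - (pq q^n)^2 * pq q^2 ≠ 0 := by
    have h := pq_pow_lt_one hq0 hq1 (2*n+2) (by omega)
    rwa [show pq q^(2*n+2) = (pq q^n)^2 * pq q^2 from by ring] at h
  have f2 : (1:ℂ) - (pq q^n)^2 * pq q^3 ≠ 0 := by
    have h := pq_pow_lt_one hq0 hq1 (2*n+3) (by omega)
    rwa [show pq q^(2*n+3) = (pq q^n)^2 * pq q^3 from by ring] at h
  have hDL : (1 - pq q) * (qpoch q (2*n+1) * (1 - (pq q^n)^2 * pq q^2)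
      * (1 - (pq q^n)^2 * pq q^3)) ≠ 0 := by
    norm_num [mul_eq_zero, hQ1, f0, f1, f2]
  have hD1 : (1 - pq q) * qpoch q (2*n+1) ≠ 0 := mul_ne_zero f0 hQ1
  rw [add_zero, mul_zero, sub_zero, div_div, div_mul_eq_mul_div,
    div_sub_div _ _ (mul_ne_zero hD1 two_ne_zero) two_ne_zero,
    div_eq_div_iff hDL (mul_ne_zero (mul_ne_zero hD1 two_ne_zero) two_ne_zero)]
  rcases hs with rfl | rfl <;> ring

lemma idB_zero (hq0 : 0 < q) (hq1 : q < 1) (hs : s = 1 ∨ s = -1) (n : ℕ) :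
    acoefN q s (n+2) 0
      = acoefN q s (n+1) 1
        - ascB q s (n+1) * acoefN q s (n+1) 0
        - ascC q (n+1) * acoefN q s n 0 := by
  rw [acoefN_le (n+2) 0 (by omega), acoefN_le (n+1) 1 (by omega),
    acoefN_le (n+1) 0 (by omega), acoefN_le n 0 (by omega)]
  rw [show n+2-0 = n+2 from by omega, show n+2+0 = n+2 from by omega,
    show 2*(n+2) = 2*n+4 from by ring,
    show n+1-1 = n from by omega, show n+1+1 = n+2 from by omega,
    show 2*(n+1) = 2*n+2 from by ring,
    show n+1-0 = n+1 from by omega, show n+1+0 = n+1 from by omega,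
    show n-0 = n from by omega, show n+0 = n from by omega]
  have W1 : qpoch q (n+1) = qpoch q n * (1 - pq q^n * pq q) := by
    rw [qpoch_succ, show pq q^(n+1) = pq q^n * pq q from by ring]
  have W2 : qpoch q (n+2) = qpoch q n * (1 - pq q^n * pq q) * (1 - pq q^n * pq q^2) := by
    rw [show n+2 = n+1+1 from rfl, qpoch_succ, W1,
      show pq q^(n+1+1) = pq q^n * pq q^2 from by ring]
  have W3 : qpoch q (2*n+1) = qpoch q (2*n) * (1 - (pq q^n)^2 * pq q) := by
    rw [show 2*n+1 = (2*n)+1 from rfl, qpoch_succ,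
      show pq q^((2*n)+1) = (pq q^n)^2 * pq q from by ring]
  have W4 : qpoch q (2*n+2) = qpoch q (2*n) * (1 - (pq q^n)^2 * pq q)
      * (1 - (pq q^n)^2 * pq q^2) := by
    rw [show 2*n+2 = (2*n+1)+1 from by omega, qpoch_succ, W3,
      show pq q^((2*n+1)+1) = (pq q^n)^2 * pq q^2 from by ring]
  have W5 : qpoch q (2*n+4) = qpoch q (2*n) * (1 - (pq q^n)^2 * pq q)
      * (1 - (pq q^n)^2 * pq q^2) * (1 - (pq q^n)^2 * pq q^3)
      * (1 - (pq q^n)^2 * pq q^4) := by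
    rw [show 2*n+4 = (2*n+3)+1 from by omega, qpoch_succ,
      show 2*n+3 = (2*n+2)+1 from by omega, qpoch_succ, W4,
      show pq q^((2*n+2)+1) = (pq q^n)^2 * pq q^3 from by ring,
      show pq q^((2*n+3)+1) = (pq q^n)^2 * pq q^4 from by ring]
  have b0 : ascB q s (n+1) = s * (1 + pq q) * ((pq q^n)^2 * pq q^2) / 2 := by
    rw [ascB_eq hq0, show pq q^(2*(n+1)) = (pq q^n)^2 * pq q^2 from by ring]
  have c0 : ascC q (n+1) = (1 - (pq q^n)^2 * pq q^2) * (1 - (pq q^n)^2 * pq q) / 4 := by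
    rw [ascC_eq hq0,
      show pq q^(2*(n+1)) = (pq q^n)^2 * pq q^2 from by ring,
      show pq q^(2*n+1) = (pq q^n)^2 * pq q from by ring]
  rw [W5, W4, W2, W1, b0, c0,
    show (-s)^(n+2) = (-s)^n*((-s)*(-s)) from by ring,
    show (-s)^(n+1) = (-s)^n*(-s) from by ring,
    show ((2:ℂ)⁻¹)^(n+2) = 2⁻¹^n*(2⁻¹*2⁻¹) from by ring,
    show ((2:ℂ)⁻¹)^(n+1) = 2⁻¹^n*2⁻¹ from by ring]
  have hQ1 := qpoch_ne hq0 hq1 n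
  have hQ3 := qpoch_ne hq0 hq1 (2*n)
  have f1 : (1:ℂ) - pq q^n * pq q ≠ 0 := by
    have h := pq_pow_lt_one hq0 hq1 (n+1) (by omega)
    rwa [show pq q^(n+1) = pq q^n * pq q from by ring] at h
  have f2 : (1:ℂ) - pq q^n * pq q^2 ≠ 0 := by
    have h := pq_pow_lt_one hq0 hq1 (n+2) (by omega)
    rwa [show pq q^(n+2) = pq q^n * pq q^2 from by ring] at h
  have hDL : qpoch q n * (1 - pq q^n * pq q) * (1 - pq q^n * pq q^2)
      * (qpoch q n * (1 - pq q^n * pq q) * (1 - pq q^n * pq q^2)) ≠ 0 := by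
    norm_num [mul_eq_zero, hQ1, f1, f2]
  have hD1 : qpoch q n * (qpoch q n * (1 - pq q^n * pq q) * (1 - pq q^n * pq q^2)) ≠ 0 := by
    norm_num [mul_eq_zero, hQ1, f1, f2]
  have hD3 : qpoch q n * (1 - pq q^n * pq q) * (qpoch q n * (1 - pq q^n * pq q)) ≠ 0 := by
    norm_num [mul_eq_zero, hQ1, f1]
  have hD4 : qpoch q n * qpoch q n ≠ 0 := mul_ne_zero hQ1 hQ1
  rw [div_mul_div_comm, div_mul_div_comm,
    div_sub_div _ _ hD1 (mul_ne_zero two_ne_zero hD3),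
    div_sub_div _ _ (mul_ne_zero hD1 (mul_ne_zero two_ne_zero hD3))
      (mul_ne_zero (show (4:ℂ) ≠ 0 by norm_num) hD4),
    div_eq_div_iff hDL (mul_ne_zero (mul_ne_zero hD1 (mul_ne_zero two_ne_zero hD3))
      (mul_ne_zero (show (4:ℂ) ≠ 0 by norm_num) hD4))]
  rcases hs with rfl | rfl <;> ring

lemma idBN (hq0 : 0 < q) (hq1 : q < 1) (hs : s = 1 ∨ s = -1) (n K : ℕ) :
    acoefN q s (n+2) (K+1)
      = (acoefN q s (n+1) K + acoefN q s (n+1) (K+2))/2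
        - ascB q s (n+1) * acoefN q s (n+1) (K+1)
        - ascC q (n+1) * acoefN q s n (K+1) := by
  rcases lt_trichotomy K n with hk | rfl | hk
  · obtain ⟨e, rfl⟩ : ∃ e, n = K + e + 1 := ⟨n - K - 1, by omega⟩
    rw [show K+e+1+2 = K+e+3 from by omega, show K+e+1+1 = K+e+2 from by omega]
    exact idB_main hq0 hq1 hs K e
  · exact idB_sub hq0 hq1 hs K
  · rcases Nat.lt_or_ge n (K-1) with hk2 | hk2
    · -- K ≥ n+2 : everything vanishes
      rw [acoefN_gt (n+2) (K+1) (by omega), acoefN_gt (n+1) K (by omega),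
        acoefN_gt (n+1) (K+2) (by omega), acoefN_gt (n+1) (K+1) (by omega),
        acoefN_gt n (K+1) (by omega)]
      ring
    · -- K = n+1
      obtain rfl : K = n + 1 := by omega
      rw [show n+1+2 = n+3 from by omega]
      have := idB_top (s := s) hq0 hq1 n
      rw [show n+1+1 = n+2 from by omega, show n+1+2 = n+3 from by omega] at this ⊢
      exact this

lemma idB (hq0 : 0 < q) (hq1 : q < 1) (hs : s = 1 ∨ s = -1) (n : ℕ) (k : ℤ) :
    acoef q s (n+2) k
      = (acoef q s (n+1) (k-1) + acoef q s (n+1) (k+1))/2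
        - ascB q s (n+1) * acoef q s (n+1) k - ascC q (n+1) * acoef q s n k := by
  unfold acoef
  rcases lt_trichotomy k 0 with hk | rfl | hk
  · -- k ≤ -1 : k = -(K+1)
    obtain ⟨K, rfl⟩ : ∃ K : ℕ, k = -((K:ℤ)+1) := ⟨(-k-1).toNat, by omega⟩
    rw [show (-((K:ℤ)+1)).natAbs = K+1 from by omega,
      show (-((K:ℤ)+1)-1).natAbs = K+2 from by omega,
      show (-((K:ℤ)+1)+1).natAbs = K from by omega]
    rw [idBN hq0 hq1 hs n K]
    ring
  · rw [show ((0:ℤ)-1).natAbs = 1 from by omega, show ((0:ℤ)+1).natAbs = 1 from by omega,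
      show (0:ℤ).natAbs = 0 from rfl]
    rw [idB_zero hq0 hq1 hs n]
    ring
  · obtain ⟨K, rfl⟩ : ∃ K : ℕ, k = (K:ℤ)+1 := ⟨(k-1).toNat, by omega⟩
    rw [show ((K:ℤ)+1).natAbs = K+1 from by omega,
      show ((K:ℤ)+1-1).natAbs = K from by omega,
      show ((K:ℤ)+1+1).natAbs = K+2 from by omega]
    exact idBN hq0 hq1 hs n K


lemma acoef_vanish (n : ℕ) (k : ℤ) (h : n < k.natAbs) : acoef q s n k = 0 := by
  unfold acoef
  exact acoefN_gt _ _ (by omega)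

lemma sum_shrink (n M N : ℕ) (hnM : n ≤ M) (hMN : M ≤ N) (z : ℂ) :
    ∑ k ∈ Finset.Icc (-(N:ℤ)) N, acoef q s n k * z^k
      = ∑ k ∈ Finset.Icc (-(M:ℤ)) M, acoef q s n k * z^k := by
  refine (Finset.sum_subset ?_ ?_).symm
  · intro x hx
    simp only [Finset.mem_Icc] at *
    omega
  · intro x hx hx'
    simp only [Finset.mem_Icc] at hx hx'
    rw [acoef_vanish n x (by omega), zero_mul]

lemma shift_sum (a b : ℤ) (f : ℤ → ℂ) :
    ∑ k ∈ Finset.Icc (a+1) (b+1), f k = ∑ k ∈ Finset.Icc a b, f (k+1) := by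
  rw [← Finset.map_add_right_Icc, Finset.sum_map]
  rfl

lemma shift_sum' (a b : ℤ) (f : ℤ → ℂ) :
    ∑ k ∈ Finset.Icc (a-1) (b-1), f k = ∑ k ∈ Finset.Icc a b, f (k-1) := by
  have h := shift_sum (a-1) (b-1) (fun k => f (k-1))
  simp only [add_sub_cancel_right] at h
  rw [show a-1+1 = a from by ring, show b-1+1 = b from by ring] at h
  exact h.symm

lemma mul_xl_sum (M : ℕ) (z : ℂ) (hz : z ≠ 0) (c : ℤ → ℂ)
    (hc : ∀ k : ℤ, M ≤ k.natAbs → c k = 0) :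
    xl z * ∑ k ∈ Finset.Icc (-(M:ℤ)) M, c k * z^k
      = ∑ k ∈ Finset.Icc (-(M:ℤ)) M, ((c (k-1) + c (k+1))/2) * z^k := by
  have key : ∀ k : ℤ, xl z * (c k * z^k)
      = c k/2 * z^(k+1) + c k/2 * z^(k-1) := by
    intro k
    rw [zpow_add_one₀ hz, zpow_sub_one₀ hz]
    unfold xl
    field_simp
  rw [Finset.mul_sum]
  rw [Finset.sum_congr rfl fun k _ => key k, Finset.sum_add_distrib]
  have e1 : ∑ k ∈ Finset.Icc (-(M:ℤ)) M, c k/2 * z^(k+1)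
      = ∑ k ∈ Finset.Icc (-(M:ℤ)) M, c (k-1)/2 * z^k := by
    have r1 : ∑ k ∈ Finset.Icc (-(M:ℤ)) M, c k/2 * z^(k+1)
        = ∑ k ∈ Finset.Icc (-(M:ℤ)-1) ((M:ℤ)+1), c k/2 * z^(k+1) := by
      refine Finset.sum_subset ?_ ?_
      · intro x hx; simp only [Finset.mem_Icc] at *; omega
      · intro x hx hx'
        simp only [Finset.mem_Icc] at hx hx'
        rw [hc x (by omega), zero_div, zero_mul]
    have r2 : ∑ k ∈ Finset.Icc (-(M:ℤ)-1) ((M:ℤ)+1), c k/2 * z^(k+1)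
        = ∑ k ∈ Finset.Icc (-(M:ℤ)-1+1) ((M:ℤ)+1+1), c (k-1)/2 * z^k := by
      rw [shift_sum]
      exact Finset.sum_congr rfl fun k _ => by rw [show k+1-1 = k from by ring]
    rw [r1, r2, show -(M:ℤ)-1+1 = -(M:ℤ) from by ring]
    refine (Finset.sum_subset ?_ ?_).symm
    · intro x hx; simp only [Finset.mem_Icc] at *; omega
    · intro x hx hx'
      simp only [Finset.mem_Icc] at hx hx'
      rw [hc (x-1) (by omega), zero_div, zero_mul]
  have e2 : ∑ k ∈ Finset.Icc (-(M:ℤ)) M, c k/2 * z^(k-1)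
      = ∑ k ∈ Finset.Icc (-(M:ℤ)) M, c (k+1)/2 * z^k := by
    have r1 : ∑ k ∈ Finset.Icc (-(M:ℤ)) M, c k/2 * z^(k-1)
        = ∑ k ∈ Finset.Icc (-(M:ℤ)-1) ((M:ℤ)+1), c k/2 * z^(k-1) := by
      refine Finset.sum_subset ?_ ?_
      · intro x hx; simp only [Finset.mem_Icc] at *; omega
      · intro x hx hx'
        simp only [Finset.mem_Icc] at hx hx'
        rw [hc x (by omega), zero_div, zero_mul]
    have r2 : ∑ k ∈ Finset.Icc (-(M:ℤ)-1) ((M:ℤ)+1), c k/2 * z^(k-1)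
        = ∑ k ∈ Finset.Icc (-(M:ℤ)-1-1) ((M:ℤ)+1-1), c (k+1)/2 * z^k := by
      rw [shift_sum']
      exact Finset.sum_congr rfl fun k _ => by rw [show k-1+1 = k from by ring]
    rw [r1, r2, show (M:ℤ)+1-1 = (M:ℤ) from by ring]
    refine (Finset.sum_subset ?_ ?_).symm
    · intro x hx; simp only [Finset.mem_Icc] at *; omega
    · intro x hx hx'
      simp only [Finset.mem_Icc] at hx hx'
      rw [hc (x+1) (by omega), zero_div, zero_mul]
  rw [e1, e2, ← Finset.sum_add_distrib]
  exact Finset.sum_congr rfl fun k _ => by ring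


lemma acoefN_one_zero (hq0 : 0 < q) (hq1 : q < 1) : acoefN q s 1 0 = - ascB q s 0 := by
  rw [acoefN_le 1 0 (by omega), ascB_eq hq0]
  rw [show (1:ℕ)-0 = 1 from rfl, show (1:ℕ)+0 = 1 from rfl, show 2*1 = 1+1 from rfl,
    qpoch_succ, qpoch_one, show pq q^(1+1) = pq q * pq q from by ring,
    show 2*0 = 0 from rfl, pow_zero, mul_one]
  have f0 : (1:ℂ) - pq q ≠ 0 := by
    have h := pq_pow_lt_one hq0 hq1 1 le_rfl
    rwa [pow_one] at h
  rw [show -(s * (1 + pq q) / 2) = (-(s * (1 + pq q)))/2 from by ring,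
    div_eq_div_iff (mul_ne_zero f0 f0) two_ne_zero]
  ring

lemma eval_ascQ (hq0 : 0 < q) (hq1 : q < 1) (hs : s = 1 ∨ s = -1) :
    ∀ n N : ℕ, n ≤ N → ∀ z : ℂ, z ≠ 0 →
      Polynomial.eval (xl z) (ascQ q s n)
        = ∑ k ∈ Finset.Icc (-(N:ℤ)) N, acoef q s n k * z ^ k := by
  intro n
  induction n using Nat.twoStepInduction with
  | zero =>
    intro N hN z hz
    rw [sum_shrink 0 0 N le_rfl (by omega)]
    simp only [Nat.cast_zero, neg_zero, Finset.Icc_self, Finset.sum_singleton]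
    show Polynomial.eval (xl z) 1 = acoefN q s 0 0 * z ^ (0:ℤ)
    rw [Polynomial.eval_one, acoefN_diag hq0 hq1, pow_zero, zpow_zero, mul_one]
  | one =>
    intro N hN z hz
    rw [sum_shrink 1 1 N le_rfl (by omega)]
    show Polynomial.eval (xl z) (Polynomial.X - Polynomial.C (ascB q s 0)) = _
    rw [Polynomial.eval_sub, Polynomial.eval_X, Polynomial.eval_C]
    rw [show Finset.Icc (-(1:ℕ):ℤ) (1:ℕ) = {-1, 0, 1} from by decide]
    rw [Finset.sum_insert (by decide), Finset.sum_insert (by decide),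
      Finset.sum_singleton]
    show xl z - ascB q s 0
      = acoefN q s 1 1 * z ^ (-1:ℤ) + (acoefN q s 1 0 * z ^ (0:ℤ) + acoefN q s 1 1 * z ^ (1:ℤ))
    rw [acoefN_diag hq0 hq1, acoefN_one_zero hq0 hq1, zpow_zero, zpow_one,
      zpow_neg, zpow_one, pow_one]
    unfold xl
    ring
  | more n ih0 ih1 =>
    intro N hN z hz
    have eq : Polynomial.eval (xl z) (ascQ q s (n+2))
        = (xl z - ascB q s (n+1)) * Polynomial.eval (xl z) (ascQ q s (n+1))
          - ascC q (n+1) * Polynomial.eval (xl z) (ascQ q s n) := by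
      show Polynomial.eval (xl z) ((Polynomial.X - Polynomial.C (ascB q s (n + 1)))
        * ascQ q s (n + 1) - Polynomial.C (ascC q (n + 1)) * ascQ q s n) = _
      simp [Polynomial.eval_mul, Polynomial.eval_sub]
    rw [eq, ih1 N (by omega) z hz, ih0 N (by omega) z hz, sub_mul,
      mul_xl_sum N z hz _ (fun k hk => acoef_vanish (n+1) k (by omega)),
      Finset.mul_sum, Finset.mul_sum, ← Finset.sum_sub_distrib, ← Finset.sum_sub_distrib]
    refine Finset.sum_congr rfl fun k _ => ?_
    rw [idB hq0 hq1 hs n k]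
    ring

theorem stmt10_aux (hq0 : 0 < q) (hq1 : q < 1) (hs : s = 1 ∨ s = -1) :
    ∀ n : ℕ, IsSq q (ascQ q s n)
      (Polynomial.C (alphaN q n) * ascQ q s n + Polynomial.C (ascc q s n) * ascQ q s (n - 1)) := by
  intro n z hz
  have hp := pq_ne hq0
  have hxp : xp q z = xl (pq q * z) := by
    unfold xp xl pq
    rw [rp_neg hq0, mul_inv]
  have hxm : xm q z = xl ((pq q)⁻¹ * z) := by
    unfold xm xl pq
    rw [rp_neg hq0, mul_inv, inv_inv]
  rw [Polynomial.eval_add, Polynomial.eval_mul, Polynomial.eval_mul, Polynomial.eval_C,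
    Polynomial.eval_C, hxp, hxm,
    eval_ascQ hq0 hq1 hs n n le_rfl z hz,
    eval_ascQ hq0 hq1 hs (n-1) n (by omega) z hz,
    eval_ascQ hq0 hq1 hs n n le_rfl _ (mul_ne_zero hp hz),
    eval_ascQ hq0 hq1 hs n n le_rfl _ (mul_ne_zero (inv_ne_zero hp) hz),
    Finset.mul_sum, Finset.mul_sum, ← Finset.sum_add_distrib, ← Finset.sum_add_distrib,
    Finset.sum_div]
  refine Finset.sum_congr rfl fun k _ => ?_
  have h := idA hq0 hq1 hs n k.natAbs
  unfold acoef
  rcases Int.natAbs_eq k with hk | hk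
  · rw [hk]
    simp only [Int.natAbs_natCast, zpow_natCast, mul_pow, inv_pow]
    linear_combination (z ^ k.natAbs : ℂ) * h
  · rw [hk]
    simp only [Int.natAbs_neg, Int.natAbs_natCast, zpow_neg, zpow_natCast, mul_pow,
      inv_pow, mul_inv, inv_inv]
    linear_combination ((z ^ k.natAbs : ℂ))⁻¹ * h

end AuxASC

theorem stmt10 (q : ℝ) (hq0 : 0 < q) (hq1 : q < 1) (s : ℂ) (hs : s = 1 ∨ s = -1) :
    ∀ n : ℕ, IsSq q (ascQ q s n)
      (Polynomial.C (alphaN q n) * ascQ q s n + Polynomial.C (ascc q s n) * ascQ q s (n - 1)) := by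
  exact stmt10_aux hq0 hq1 hs
end

section
/- Let T̂_n denote the monic Chebyshev polynomials of the first kind and let c ∈ ℂ. Then for every n ≥ 2: (X − c)·S_q T̂_n = α_n·(T̂_{n+1} − c·T̂_n + (1/4)·T̂_{n−1}) as polynomials in ℂ[X]. -/
open Polynomial

lemma T_eval_xl (z : ℂ) (hz : z ≠ 0) : ∀ n : ℕ,
    (Polynomial.Chebyshev.T ℂ (n : ℤ)).eval (xl z) = (z ^ n + z⁻¹ ^ n) / 2 := by
  intro n
  induction n using Nat.twoStepInduction with
  | zero => norm_num [Polynomial.Chebyshev.T_zero]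
  | one => simp [Polynomial.Chebyshev.T_one, xl]
  | more n ih1 ih2 =>
    have h : ((n : ℤ) + 2) = ((n + 2 : ℕ) : ℤ) := by push_cast; ring
    have h1 : ((n : ℤ) + 1) = ((n + 1 : ℕ) : ℤ) := by push_cast; ring
    have hT := Polynomial.Chebyshev.T_add_two ℂ (n : ℤ)
    rw [h] at hT
    rw [hT]
    simp only [eval_sub, eval_mul, eval_ofNat, eval_X, h1, ih1, ih2]
    have hinv : z * z⁻¹ = 1 := mul_inv_cancel₀ hz
    rw [xl]
    linear_combination ((z ^ n + z⁻¹ ^ n) / 2) * hinv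

lemma chebM_eval (z : ℂ) (hz : z ≠ 0) (n : ℕ) (hn : 1 ≤ n) :
    (chebM n).eval (xl z) = (z ^ n + z⁻¹ ^ n) / 2 ^ n := by
  rw [chebM, if_neg (by omega)]
  rw [Polynomial.eval_smul, T_eval_xl z hz n, smul_eq_mul]
  have h2 : (2 : ℂ) ≠ 0 := two_ne_zero
  rw [zpow_sub₀ h2, zpow_one, zpow_natCast]
  field_simp

lemma rp_mul_rp_s13 (q : ℝ) (hq : 0 < q) (a b : ℝ) : rp q a * rp q b = rp q (a + b) := by
  simp only [rp]
  rw [← Complex.ofReal_mul, ← Real.rpow_add hq]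

lemma rp_ne_zero (q : ℝ) (hq : 0 < q) (a : ℝ) : rp q a ≠ 0 := by
  simp only [rp, ne_eq, Complex.ofReal_eq_zero]
  exact (Real.rpow_pos_of_pos hq a).ne'

lemma rp_pow (q : ℝ) (hq : 0 < q) (a : ℝ) (n : ℕ) : rp q a ^ n = rp q (n * a) := by
  simp only [rp, ← Complex.ofReal_pow]
  rw [← Real.rpow_natCast (q ^ a) n, ← Real.rpow_mul hq.le, mul_comm]

lemma rp_inv (q : ℝ) (hq : 0 < q) (a : ℝ) : (rp q a)⁻¹ = rp q (-a) := by
  have h : rp q a * rp q (-a) = 1 := by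
    rw [rp_mul_rp_s13 q hq, add_neg_cancel]
    simp [rp]
  exact inv_eq_of_mul_eq_one_right h

/-- The three-term recurrence for monic Chebyshev polynomials, `n ≥ 2` form. -/
lemma chebM_rec (m : ℕ) :
    (X : ℂ[X]) * chebM (m + 2) = chebM (m + 3) + C (1/4 : ℂ) * chebM (m + 1) := by
  have h2 : (2 : ℂ) ≠ 0 := two_ne_zero
  rw [chebM, chebM, chebM, if_neg (by omega), if_neg (by omega), if_neg (by omega)]
  have hT : Polynomial.Chebyshev.T ℂ ((m + 3 : ℕ) : ℤ) =
      2 * X * Polynomial.Chebyshev.T ℂ ((m + 2 : ℕ) : ℤ)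
        - Polynomial.Chebyshev.T ℂ ((m + 1 : ℕ) : ℤ) := by
    have := Polynomial.Chebyshev.T_add_two ℂ ((m : ℤ) + 1)
    convert this using 3 <;> push_cast <;> ring_nf
  rw [hT]
  simp only [smul_eq_C_mul]
  have e1 : (2 : ℂ) ^ (1 - ((m + 2 : ℕ) : ℤ)) = 2 * 2 ^ (1 - ((m + 3 : ℕ) : ℤ)) := by
    rw [show (1 - ((m + 2 : ℕ) : ℤ)) = 1 + (1 - ((m + 3 : ℕ) : ℤ)) by push_cast; ring,
      zpow_add₀ h2, zpow_one]
  have e2 : (1/4 : ℂ) * 2 ^ (1 - ((m + 1 : ℕ) : ℤ)) = 2 ^ (1 - ((m + 3 : ℕ) : ℤ)) := by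
    rw [show (1 - ((m + 1 : ℕ) : ℤ)) = 2 + (1 - ((m + 3 : ℕ) : ℤ)) by push_cast; ring,
      zpow_add₀ h2]
    norm_num
    ring
  calc (X : ℂ[X]) * (C ((2:ℂ) ^ (1 - ((m + 2 : ℕ) : ℤ))) * Polynomial.Chebyshev.T ℂ ((m+2:ℕ) : ℤ))
      = C ((2:ℂ) * 2 ^ (1 - ((m + 3 : ℕ) : ℤ))) * (X * Polynomial.Chebyshev.T ℂ ((m+2:ℕ) : ℤ)) := by
        rw [← e1]; ring
    _ = _ := by
        rw [map_mul, ← e2, map_mul, show (C (2:ℂ)) = (2 : Polynomial ℂ) from map_ofNat C 2]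
        ring

lemma injOn_xl_real : Set.InjOn (fun t : ℝ => xl (t : ℂ)) (Set.Ioi 1) := by
  have key : StrictMonoOn (fun t : ℝ => (t + t⁻¹) / 2) (Set.Ioi 1) := by
    intro a ha b hb hab
    simp only [Set.mem_Ioi] at ha hb
    have ha0 : (0:ℝ) < a := by linarith
    have hb0 : (0:ℝ) < b := by linarith
    have hai : a * a⁻¹ = 1 := mul_inv_cancel₀ ha0.ne'
    have hbi : b * b⁻¹ = 1 := mul_inv_cancel₀ hb0.ne'
    have hbipos : (0:ℝ) < b⁻¹ := inv_pos.mpr hb0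
    nlinarith [mul_pos (sub_pos.2 hab) hbipos]
  intro a ha b hb hab
  have : ((a + a⁻¹) / 2 : ℝ) = ((b + b⁻¹) / 2 : ℝ) := by
    have := hab
    simp only [xl] at this
    exact_mod_cast this
  exact key.injOn ha hb this

theorem stmt13 (q : ℝ) (hq0 : 0 < q) (hq1 : q < 1) (c : ℂ) :
    ∀ n : ℕ, 2 ≤ n → ∀ S : Polynomial ℂ, IsSq q (chebM n) S →
      (Polynomial.X - Polynomial.C c) * S =
        Polynomial.C (alphaN q n) *
          (chebM (n + 1) - Polynomial.C c * chebM n + Polynomial.C (1/4 : ℂ) * chebM (n - 1)) := by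
  intro n hn S hS
  -- Step 1: S = α_n • chebM n
  have hn1 : 1 ≤ n := by omega
  have hSeq : S = C (alphaN q n) * chebM n := by
    apply Polynomial.eq_of_infinite_eval_eq
    apply Set.Infinite.mono (s := (fun t : ℝ => xl (t : ℂ)) '' Set.Ioi 1)
    · rintro x ⟨t, ht, rfl⟩
      simp only [Set.mem_Ioi] at ht
      have htC : (t : ℂ) ≠ 0 := by
        simp only [ne_eq, Complex.ofReal_eq_zero]; linarith
      have hw : rp q (1/2) * (t : ℂ) ≠ 0 := mul_ne_zero (rp_ne_zero q hq0 _) htC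
      have hv : rp q (-(1/2)) * (t : ℂ) ≠ 0 := mul_ne_zero (rp_ne_zero q hq0 _) htC
      have hxp : xp q (t : ℂ) = xl (rp q (1/2) * (t : ℂ)) := by
        rw [xp, xl, mul_inv, rp_inv q hq0]
      have hxm : xm q (t : ℂ) = xl (rp q (-(1/2)) * (t : ℂ)) := by
        rw [xm, xl, mul_inv, rp_inv q hq0]
        norm_num
      have hpow1 : rp q (1/2) ^ n = rp q ((n : ℝ)/2) := by
        rw [rp_pow q hq0]; congr 1; ring
      have hpow2 : rp q (-(1/2)) ^ n = rp q (-((n : ℝ)/2)) := by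
        rw [rp_pow q hq0]; congr 1; ring
      have hinvrp1 : (rp q (1/2))⁻¹ = rp q (-(1/2)) := rp_inv q hq0 _
      have hinvrp2 : (rp q (-(1/2)))⁻¹ = rp q (1/2) := by
        rw [rp_inv q hq0]; norm_num
      simp only [Set.mem_setOf_eq]
      rw [hS (t : ℂ) htC, hxp, hxm,
        chebM_eval _ hw n hn1, chebM_eval _ hv n hn1,
        eval_mul, eval_C, chebM_eval _ htC n hn1]
      rw [mul_inv, mul_inv, hinvrp1, hinvrp2, mul_pow, mul_pow, mul_pow, mul_pow,
        hpow1, hpow2, alphaN]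
      ring
    · apply Set.Infinite.image injOn_xl_real (Set.Ioi_infinite 1)
  obtain ⟨m, rfl⟩ : ∃ m, n = m + 2 := ⟨n - 2, by omega⟩
  rw [hSeq]
  have hrec := chebM_rec m
  have h1 : m + 2 + 1 = m + 3 := rfl
  have h2 : m + 2 - 1 = m + 1 := rfl
  rw [h1, h2]
  linear_combination (Polynomial.C (alphaN q (m + 2))) * hrec
end
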